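/- arXiv:1510.07982 — 4 statements merged into one kernel-verified Lean document; each statement's English description precedes it below -/
import Mathlib

section
/- Let G be a graph of order n ≥ 2 with vertex set V = {1,…,n}, let {x,y} be an edge of G and let t ≥ 2 be an integer. Then the number of copies of {x,y} in S(G,t) whose x-endpoint has degree d(x) and whose y-endpoint has degree d(y) is f_{S(G,t)}(d(x),d(y)) = n^{t−2}·(n − d(x) − d(y) + τ(x,y)). -/
open Finset

/-- The generalized Sierpiński graph `S(G,t)` on words of length `t` over the vertex set. -/
def sierpinskiGraph {V : Type*} (G : SimpleGraph V) (t : ℕ) :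
    SimpleGraph (Fin t → V) where
  Adj u v := ∃ i : Fin t, (∀ j, j < i → u j = v j) ∧ u i ≠ v i ∧ G.Adj (u i) (v i) ∧
      ∀ j, i < j → u j = v i ∧ v j = u i
  symm := by
    constructor
    rintro u v ⟨i, h1, h2, h3, h4⟩
    exact ⟨i, fun j hj => (h1 j hj).symm, fun h => h2 h.symm, h3.symm,
      fun j hj => ⟨(h4 j hj).2, (h4 j hj).1⟩⟩
  loopless := by
    constructor
    rintro u ⟨i, _, h2, _⟩
    exact h2 rfl

instance {V : Type*} [Fintype V] [DecidableEq V] (G : SimpleGraph V) [DecidableRel G.Adj]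
    (t : ℕ) : DecidableRel (sierpinskiGraph G t).Adj := fun u v =>
  inferInstanceAs (Decidable (∃ i : Fin t, (∀ j, j < i → u j = v j) ∧ u i ≠ v i ∧
    G.Adj (u i) (v i) ∧ ∀ j, i < j → u j = v i ∧ v j = u i))


lemma sierpinski_adj_iff {V : Type*} (G : SimpleGraph V) {t : ℕ} (u v : Fin t → V) :
    (sierpinskiGraph G t).Adj u v ↔ ∃ i : Fin t, (∀ j, j < i → u j = v j) ∧ u i ≠ v i ∧
      G.Adj (u i) (v i) ∧ ∀ j, i < j → u j = v i ∧ v j = u i := Iff.rfl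

lemma sierpinski_degree {V : Type*} [Fintype V] [DecidableEq V] (G : SimpleGraph V)
    [DecidableRel G.Adj] {t : ℕ} (u : Fin t → V) (L : Fin t) (hL : ∀ j : Fin t, j ≤ L) :
    (sierpinskiGraph G t).degree u = G.degree (u L) +
      (if ∃ k : Fin t, (∀ j, k < j → u j = u L) ∧ G.Adj (u k) (u L) then 1 else 0) := by
  classical
  set A : Finset (Fin t → V) :=
    (G.neighborFinset (u L)).image (fun z => Function.update u L z) with hA
  have hAmem : ∀ v, v ∈ A ↔ G.Adj (u L) (v L) ∧ ∀ j, j ≠ L → v j = u j := by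
    intro v
    constructor
    · intro hv
      simp only [hA, mem_image, SimpleGraph.mem_neighborFinset] at hv
      obtain ⟨z, hz, rfl⟩ := hv
      refine ⟨by simpa using hz, fun j hj => Function.update_of_ne hj _ _⟩
    · rintro ⟨h1, h2⟩
      simp only [hA, mem_image, SimpleGraph.mem_neighborFinset]
      refine ⟨v L, h1, ?_⟩
      funext j
      by_cases hj : j = L
      · subst hj; simp
      · rw [Function.update_of_ne hj, h2 j hj]
  have hAsub : A ⊆ (sierpinskiGraph G t).neighborFinset u := by
    intro v hv
    rw [hAmem] at hv
    obtain ⟨h1, h2⟩ := hv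
    rw [SimpleGraph.mem_neighborFinset]
    exact ⟨L, fun j hj => (h2 j (ne_of_lt hj)).symm, fun h => (G.ne_of_adj h1) h,
      h1, fun j hj => absurd (hL j) (not_le_of_gt hj)⟩
  set B : Finset (Fin t → V) := (sierpinskiGraph G t).neighborFinset u \ A with hB
  have hsplit : (sierpinskiGraph G t).degree u = A.card + B.card := by
    rw [← SimpleGraph.card_neighborFinset_eq_degree, ← Finset.union_sdiff_of_subset hAsub,
      Finset.card_union_of_disjoint Finset.disjoint_sdiff]
  have hAcard : A.card = G.degree (u L) := by
    rw [hA, Finset.card_image_of_injective _ (Function.update_injective u L)]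
    exact G.card_neighborFinset_eq_degree (u L)
  -- generic analysis of an element of B
  have hBmem : ∀ v ∈ B, ∃ i : Fin t, i < L ∧ (∀ j, j < i → u j = v j) ∧ u i ≠ v i ∧
      v i = u L ∧ (∀ j, i < j → u j = u L) ∧ (∀ j, i < j → v j = u i) ∧
      G.Adj (u i) (u L) := by
    intro v hv
    rw [hB, mem_sdiff, SimpleGraph.mem_neighborFinset] at hv
    obtain ⟨⟨i, h1, h2, h3, h4⟩, hvA⟩ := hv
    have hiL : i ≠ L := by
      rintro rfl
      exact hvA ((hAmem v).2 ⟨h3, fun j hj =>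
        (h1 j (lt_of_le_of_ne (hL j) hj)).symm⟩)
    have hiL' : i < L := lt_of_le_of_ne (hL i) hiL
    have hvi : v i = u L := ((h4 L hiL').1).symm
    exact ⟨i, hiL', h1, h2, hvi, fun j hj => (h4 j hj).1.trans hvi,
      fun j hj => (h4 j hj).2, hvi ▸ h3⟩
  rw [hsplit, hAcard]
  congr 1
  split_ifs with hextra
  · obtain ⟨k, hk1, hk2⟩ := hextra
    have hkL : k ≠ L := fun h => G.loopless.irrefl _ (h ▸ hk2)
    have hkL' : k < L := lt_of_le_of_ne (hL k) hkL
    have hukL : u k ≠ u L := G.ne_of_adj hk2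
    have : B = {fun j => if j < k then u j else if j = k then u L else u k} := by
      ext v
      rw [Finset.mem_singleton]
      constructor
      · intro hv
        obtain ⟨i, hiL', h1, h2, hvi, htail, htail2, hadj⟩ := hBmem v hv
        have hik : i = k := by
          by_contra hne
          rcases lt_or_gt_of_ne hne with h | h
          · exact hukL (htail k h)
          · exact h2 ((hk1 i h).trans hvi.symm)
        subst hik
        funext j
        by_cases hj1 : j < i
        · rw [if_pos hj1]; exact (h1 j hj1).symm
        · rw [if_neg hj1]
          by_cases hj2 : j = i
          · rw [if_pos hj2, hj2]; exact hvi
          · rw [if_neg hj2]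
            have : i < j := by
              rcases lt_trichotomy i j with h | h | h
              · exact h
              · exact absurd h.symm hj2
              · exact absurd h hj1
            exact htail2 j this
      · rintro rfl
        rw [hB, mem_sdiff, SimpleGraph.mem_neighborFinset]
        constructor
        · refine ⟨k, fun j hj => (if_pos hj).symm, ?_, ?_, ?_⟩
          · simp only [lt_irrefl, if_neg, if_pos rfl]
            intro h; exact hukL h
          · simpa only [lt_irrefl, if_neg, if_pos rfl, ↓reduceIte] using hk2
          · intro j hj
            have hj1 : ¬ j < k := not_lt_of_gt hj
            have hj2 : j ≠ k := ne_of_gt hj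
            simp only [lt_irrefl, if_neg hj1, if_neg hj2, if_pos rfl]
            exact ⟨hk1 j hj, trivial⟩
        · intro hmem
          rw [hAmem] at hmem
          have := hmem.2 k hkL
          simp only [lt_irrefl, if_neg, if_pos rfl] at this
          exact hukL this.symm
    rw [this, Finset.card_singleton]
  · have : B = ∅ := by
      rw [Finset.eq_empty_iff_forall_notMem]
      intro v hv
      obtain ⟨i, hiL', h1, h2, hvi, htail, htail2, hadj⟩ := hBmem v hv
      exact hextra ⟨i, htail, hadj⟩
    rw [this, Finset.card_empty]
/-- The general Randić index `R_α`. -/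
noncomputable def randic {V : Type*} [Fintype V] (G : SimpleGraph V) (α : ℝ) : ℝ := by
  classical
  exact ∑ e ∈ G.edgeFinset,
    Sym2.lift ⟨fun u v => ((G.degree u : ℝ) * (G.degree v : ℝ)) ^ α,
      fun u v => by dsimp only; rw [mul_comm]⟩ e

/-- `τ(x,y)`: the number of triangles containing the adjacent vertices `x` and `y`. -/
def tau {V : Type*} [Fintype V] [DecidableEq V] (G : SimpleGraph V) [DecidableRel G.Adj]
    (x y : V) : ℕ := (G.neighborFinset x ∩ G.neighborFinset y).card

lemma tau_comm {V : Type*} [Fintype V] [DecidableEq V] (G : SimpleGraph V) [DecidableRel G.Adj]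
    (x y : V) : tau G x y = tau G y x := by
  simp [tau, Finset.inter_comm]

/-- `ψ(t) = 1 + n + ⋯ + n^{t-1}`. -/
def psi (n t : ℕ) : ℕ := ∑ i ∈ Finset.range t, n ^ i

/-- `τ(G)`: the number of triangles of `G`. -/
noncomputable def triangleCount {V : Type*} [Fintype V] (G : SimpleGraph V) : ℕ := by
  classical exact (G.cliqueFinset 3).card

/-- `u` is the `x`-endpoint and `v` the `y`-endpoint of a copy of the edge `{x,y}` in `S(G,t)`. -/
def isCopy {V : Type*} {t : ℕ} (x y : V) (u v : Fin t → V) : Prop :=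
  ∃ i : Fin t, (∀ j, j < i → u j = v j) ∧ u i = x ∧ v i = y ∧ ∀ j, i < j → u j = y ∧ v j = x

instance {V : Type*} [DecidableEq V] {t : ℕ} (x y : V) (u v : Fin t → V) :
    Decidable (isCopy x y u v) :=
  inferInstanceAs (Decidable (∃ i : Fin t, (∀ j, j < i → u j = v j) ∧ u i = x ∧ v i = y ∧
    ∀ j, i < j → u j = y ∧ v j = x))

/-- `f_{S(G,t)}(a,b)`: the number of copies of the edge `{x,y}` of `G` in `S(G,t)` whose
`x`-endpoint has degree `a` and whose `y`-endpoint has degree `b` in `S(G,t)`. -/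
def copyCount {V : Type*} [Fintype V] [DecidableEq V] (G : SimpleGraph V) [DecidableRel G.Adj]
    (t : ℕ) (x y : V) (a b : ℕ) : ℕ :=
  (Finset.univ.filter fun p : (Fin t → V) × (Fin t → V) =>
    isCopy x y p.1 p.2 ∧ (sierpinskiGraph G t).degree p.1 = a ∧
      (sierpinskiGraph G t).degree p.2 = b).card


/-- Append a letter to a word of length `t-1`. -/
def mkw {V : Type*} (t : ℕ) (w : Fin (t-1) → V) (z : V) : Fin t → V :=
  fun j => if h : (j : ℕ) < t - 1 then w ⟨j, h⟩ else z

lemma mkw_lt {V : Type*} {t : ℕ} (w : Fin (t-1) → V) (z : V) (j : Fin t)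
    (h : (j : ℕ) < t - 1) : mkw t w z j = w ⟨j, h⟩ := dif_pos h

lemma mkw_last {V : Type*} {t : ℕ} (w : Fin (t-1) → V) (z : V) (j : Fin t)
    (h : ¬ (j : ℕ) < t - 1) : mkw t w z j = z := dif_neg h

lemma last_max {t : ℕ} (ht : 1 ≤ t) (j : Fin t) : j ≤ (⟨t-1, by omega⟩ : Fin t) := by
  rw [Fin.le_def]; have := j.2; dsimp; omega

lemma degree_mkw_extra {V : Type*} [Fintype V] [DecidableEq V] (G : SimpleGraph V)
    [DecidableRel G.Adj] {t : ℕ} (ht : 2 ≤ t) (w : Fin (t-1) → V) (z : V)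
    (hadj : G.Adj (w ⟨t-2, by omega⟩) z) :
    (sierpinskiGraph G t).degree (mkw t w z) = G.degree z + 1 := by
  have ht1 : 1 ≤ t := by omega
  rw [sierpinski_degree G (mkw t w z) ⟨t-1, by omega⟩ (last_max ht1),
    mkw_last w z ⟨t-1, by omega⟩ (by dsimp; omega), if_pos]
  refine ⟨⟨t-2, by omega⟩, ?_, ?_⟩
  · intro j hj
    apply mkw_last
    rw [Fin.lt_def] at hj
    have := j.2
    dsimp at hj ⊢
    omega
  · rw [mkw_lt w z ⟨t-2, by omega⟩ (by dsimp; omega)]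
    exact hadj

lemma degree_mkw_no {V : Type*} [Fintype V] [DecidableEq V] (G : SimpleGraph V)
    [DecidableRel G.Adj] {t : ℕ} (ht : 2 ≤ t) (w : Fin (t-1) → V) {z z' : V}
    (hzz' : G.Adj z z')
    (h1 : w ⟨t-2, by omega⟩ ∉ G.neighborFinset z)
    (h2 : w ⟨t-2, by omega⟩ ∉ G.neighborFinset z') :
    (sierpinskiGraph G t).degree (mkw t w z) = G.degree z := by
  have ht1 : 1 ≤ t := by omega
  rw [sierpinski_degree G (mkw t w z) ⟨t-1, by omega⟩ (last_max ht1),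
    mkw_last w z ⟨t-1, by omega⟩ (by dsimp; omega), if_neg, add_zero]
  rintro ⟨k, hk1, hk2⟩
  have hkt : (k : ℕ) < t - 1 := by
    rcases lt_or_ge (k : ℕ) (t-1) with h | h
    · exact h
    · exfalso
      have hkL : mkw t w z k = z := mkw_last w z k (by omega)
      rw [hkL] at hk2
      exact G.loopless.irrefl z hk2
  rw [mkw_lt w z k hkt] at hk2
  by_cases hk : (k : ℕ) = t - 2
  · apply h1
    rw [SimpleGraph.mem_neighborFinset]
    have : (⟨t-2, by omega⟩ : Fin (t-1)) = ⟨(k : ℕ), hkt⟩ := by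
      apply Fin.ext; dsimp; omega
    rw [this]
    exact hk2.symm
  · have hklt : (k : ℕ) < t - 2 := by omega
    have hP : mkw t w z ⟨t-2, by omega⟩ = z :=
      hk1 ⟨t-2, by omega⟩ (by rw [Fin.lt_def]; dsimp; omega)
    rw [mkw_lt w z ⟨t-2, by omega⟩ (by dsimp; omega)] at hP
    apply h2
    rw [SimpleGraph.mem_neighborFinset, hP]
    exact hzz'.symm

lemma card_filter_eval {α : Type*} [Fintype α] [DecidableEq α] {m : ℕ} (a : Fin m)
    (s : Finset α) :
    (Finset.univ.filter (fun w : Fin m → α => w a ∈ s)).card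
      = s.card * Fintype.card α ^ (m - 1) := by
  classical
  have e : {w : Fin m → α // w a ∈ s} ≃ s × ({j : Fin m // j ≠ a} → α) :=
    { toFun := fun w => (⟨w.1 a, w.2⟩, fun j => w.1 j.1)
      invFun := fun p => ⟨fun j => if h : j = a then p.1.1 else p.2 ⟨j, h⟩, by simp⟩
      left_inv := fun w => Subtype.ext (funext fun j => by
        dsimp only
        split_ifs with h
        · subst h; rfl
        · rfl)
      right_inv := fun p => by
        refine Prod.ext (Subtype.ext ?_) (funext fun j => ?_)
        · exact dif_pos rfl
        · exact dif_neg j.2 }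
  have hcard := Fintype.card_congr e
  have hne : Fintype.card {j : Fin m // j ≠ a} = m - 1 := by
    have h2 := Fintype.card_subtype_compl (p := fun j : Fin m => j = a)
    simp only [Fintype.card_subtype_eq, Fintype.card_fin] at h2
    rw [h2]
  rw [Fintype.card_prod, Fintype.card_coe, Fintype.card_fun, hne,
    Fintype.card_subtype] at hcard
  exact hcard

theorem copyCount_deg_deg {n : ℕ} (hn : 2 ≤ n) (G : SimpleGraph (Fin n)) [DecidableRel G.Adj]
    (x y : Fin n) (hxy : G.Adj x y) (t : ℕ) (ht : 2 ≤ t) :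
    (copyCount G t x y (G.degree x) (G.degree y) : ℤ) =
      (n : ℤ) ^ (t - 2) * ((n : ℤ) - G.degree x - G.degree y + tau G x y) := by
  classical
  have hp1 : t - 1 < t := by omega
  have hp2 : t - 2 < t := by omega
  have hp3 : t - 2 < t - 1 := by omega
  have hLmax : ∀ j : Fin t, j ≤ (⟨t-1, hp1⟩ : Fin t) := by
    intro j
    rw [Fin.le_def]
    have := j.2
    dsimp
    omega
  have hinj : Function.Injective (fun w : Fin (t-1) → Fin n => (mkw t w x, mkw t w y)) := by
    intro w w' h
    funext j
    have hj : (j : ℕ) < t - 1 := j.2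
    have h1 := congrArg (fun q : (Fin t → Fin n) × (Fin t → Fin n) =>
      q.1 ⟨(j : ℕ), by omega⟩) h
    dsimp only at h1
    rwa [mkw_lt w x ⟨(j : ℕ), by omega⟩ hj, mkw_lt w' x ⟨(j : ℕ), by omega⟩ hj] at h1
  have himage : copyCount G t x y (G.degree x) (G.degree y)
      = ((Finset.univ.filter (fun w : Fin (t-1) → Fin n =>
          w ⟨t-2, hp3⟩ ∈ (G.neighborFinset x ∪ G.neighborFinset y)ᶜ)).image
          (fun w => (mkw t w x, mkw t w y))).card := by
    rw [copyCount]
    congr 1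
    ext p
    rw [mem_filter, Finset.mem_image]
    constructor
    · rintro ⟨-, hcopy, hdu, hdv⟩
      obtain ⟨i, hc1, hc2, hc3, hc4⟩ := hcopy
      have hiL : i = ⟨t-1, hp1⟩ := by
        by_contra hne
        have hiL' : i < ⟨t-1, hp1⟩ := lt_of_le_of_ne (hLmax i) hne
        have hdu' : (sierpinskiGraph G t).degree p.1 = G.degree y + 1 := by
          rw [sierpinski_degree G p.1 ⟨t-1, hp1⟩ hLmax, (hc4 _ hiL').1, if_pos]
          exact ⟨i, fun j hj => (hc4 j hj).1, by rw [hc2]; exact hxy⟩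
        have hdv' : (sierpinskiGraph G t).degree p.2 = G.degree x + 1 := by
          rw [sierpinski_degree G p.2 ⟨t-1, hp1⟩ hLmax, (hc4 _ hiL').2, if_pos]
          exact ⟨i, fun j hj => (hc4 j hj).2, by rw [hc3]; exact hxy.symm⟩
        rw [hdu'] at hdu
        rw [hdv'] at hdv
        omega
      subst hiL
      have hLval : ∀ j : Fin t, ¬ (j : ℕ) < t - 1 → j = ⟨t-1, hp1⟩ := by
        intro j hj
        have := j.2
        apply Fin.ext
        dsimp
        omega
      have htail1 : ∀ j : Fin t, (⟨t-2, hp2⟩ : Fin t) < j → j = ⟨t-1, hp1⟩ := by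
        intro j hj
        rw [Fin.lt_def] at hj
        have := j.2
        apply Fin.ext
        dsimp at hj ⊢
        omega
      refine ⟨fun j => p.1 (Fin.castLE (by omega) j), ?_, ?_⟩
      · -- membership in the filter
        rw [mem_filter]
        refine ⟨mem_univ _, ?_⟩
        show p.1 (Fin.castLE (by omega) (⟨t-2, hp3⟩ : Fin (t-1))) ∈ _
        have hcast : (Fin.castLE (by omega : t - 1 ≤ t) (⟨t-2, hp3⟩ : Fin (t-1)))
            = (⟨t-2, hp2⟩ : Fin t) := rfl
        rw [hcast, mem_compl, mem_union, SimpleGraph.mem_neighborFinset,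
          SimpleGraph.mem_neighborFinset]
        rintro (h | h)
        · have hdu' : (sierpinskiGraph G t).degree p.1 = G.degree x + 1 := by
            rw [sierpinski_degree G p.1 ⟨t-1, hp1⟩ hLmax, hc2, if_pos]
            exact ⟨⟨t-2, hp2⟩, fun j hj => by rw [htail1 j hj]; exact hc2, h.symm⟩
          rw [hdu'] at hdu
          omega
        · have hdv' : (sierpinskiGraph G t).degree p.2 = G.degree y + 1 := by
            rw [sierpinski_degree G p.2 ⟨t-1, hp1⟩ hLmax, hc3, if_pos]
            have hP2 : p.2 (⟨t-2, hp2⟩ : Fin t) = p.1 (⟨t-2, hp2⟩ : Fin t) := by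
              refine (hc1 _ ?_).symm
              rw [Fin.lt_def]
              dsimp
              omega
            exact ⟨⟨t-2, hp2⟩, fun j hj => by rw [htail1 j hj]; exact hc3,
              by rw [hP2]; exact h.symm⟩
          rw [hdv'] at hdv
          omega
      · -- the pair equality
        refine Prod.ext (funext fun j => ?_) (funext fun j => ?_)
        · show mkw t (fun j => p.1 (Fin.castLE (by omega) j)) x j = p.1 j
          by_cases h : (j : ℕ) < t - 1
          · rw [mkw_lt _ _ _ h]
            exact congrArg p.1 (Fin.ext rfl)
          · rw [mkw_last _ _ _ h, hLval j h]
            exact hc2.symm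
        · show mkw t (fun j => p.1 (Fin.castLE (by omega) j)) y j = p.2 j
          by_cases h : (j : ℕ) < t - 1
          · rw [mkw_lt _ _ _ h]
            exact (congrArg p.1 (Fin.ext rfl)).trans
              (hc1 j (by rw [Fin.lt_def]; dsimp; omega))
          · rw [mkw_last _ _ _ h, hLval j h]
            exact hc3.symm
    · rintro ⟨w, hwW, rfl⟩
      rw [mem_filter, mem_compl, mem_union] at hwW
      have hw1 : w ⟨t-2, hp3⟩ ∉ G.neighborFinset x := fun h => hwW.2 (Or.inl h)
      have hw2 : w ⟨t-2, hp3⟩ ∉ G.neighborFinset y := fun h => hwW.2 (Or.inr h)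
      refine ⟨mem_univ _, ⟨⟨t-1, hp1⟩, ?_, ?_, ?_, ?_⟩, ?_, ?_⟩
      · intro j hj
        have hj' : (j : ℕ) < t - 1 := by
          rw [Fin.lt_def] at hj
          dsimp at hj
          omega
        show mkw t w x j = mkw t w y j
        rw [mkw_lt _ _ _ hj', mkw_lt _ _ _ hj']
      · exact mkw_last _ _ _ (by dsimp; omega)
      · exact mkw_last _ _ _ (by dsimp; omega)
      · intro j hj
        exact absurd (hLmax j) (not_le_of_gt hj)
      · exact degree_mkw_no G ht w hxy hw1 hw2
      · exact degree_mkw_no G ht w hxy.symm hw2 hw1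
  rw [Finset.card_image_of_injective _ hinj, card_filter_eval, Fintype.card_fin] at himage
  have h1 : (G.neighborFinset x ∪ G.neighborFinset y).card + tau G x y
      = G.degree x + G.degree y := by
    rw [tau, Finset.card_union_add_card_inter]
    rfl
  have h2 : (G.neighborFinset x ∪ G.neighborFinset y).card
      + ((G.neighborFinset x ∪ G.neighborFinset y)ᶜ : Finset (Fin n)).card = n := by
    rw [Finset.card_add_card_compl, Fintype.card_fin]
  have h3 : (((G.neighborFinset x ∪ G.neighborFinset y)ᶜ : Finset (Fin n)).card : ℤ)
      = (n : ℤ) - G.degree x - G.degree y + tau G x y := by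
    have h1' := congrArg (Nat.cast : ℕ → ℤ) h1
    have h2' := congrArg (Nat.cast : ℕ → ℤ) h2
    push_cast at h1' h2'
    linarith
  have h4 : t - 1 - 1 = t - 2 := by omega
  rw [himage, h4]
  push_cast
  rw [h3]
  ring
end

section
/- Let G be a graph of order n ≥ 2 with vertex set V = {1,…,n}, let {x,y} be an edge of G and let t ≥ 2 be an integer. Then the number of copies of {x,y} in S(G,t) whose x-endpoint has degree d(x) and whose y-endpoint has degree d(y)+1 is f_{S(G,t)}(d(x),d(y)+1) = n^{t−2}·(d(y) − τ(x,y)) − ψ(t−2)·d(x). -/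
open Finset

section Aux
variable {V : Type*} [Fintype V] [DecidableEq V] (G : SimpleGraph V) [DecidableRel G.Adj]
set_option linter.unusedSectionVars false

/-- `w` ends with `c z z ⋯ z` where `c ~ z`. -/
def Qtail (z : V) {s : ℕ} (w : Fin s → V) : Prop :=
  ∃ i, (∀ j, i < j → w j = z) ∧ G.Adj (w i) z

instance (z : V) {s : ℕ} (w : Fin s → V) : Decidable (Qtail G z w) :=
  inferInstanceAs (Decidable (∃ i, (∀ j, i < j → w j = z) ∧ G.Adj (w i) z))

lemma Qtail_snoc (z c : V) {s : ℕ} (w : Fin s → V) :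
    Qtail G z (Fin.snoc w c) ↔ G.Adj c z ∨ (c = z ∧ Qtail G z w) := by
  constructor
  · rintro ⟨i, hi, ha⟩
    rcases Fin.eq_castSucc_or_eq_last i with ⟨i', rfl⟩ | rfl
    · refine Or.inr ⟨?_, i', fun j hj => ?_, ?_⟩
      · have := hi (Fin.last s) (Fin.castSucc_lt_last i')
        simpa using this
      · have := hi j.castSucc (by exact_mod_cast hj)
        simpa using this
      · simpa using ha
    · simpa using Or.inl (by simpa using ha)
  · rintro (h | ⟨rfl, i, hi, ha⟩)
    · exact ⟨Fin.last s, fun j hj => absurd hj (not_lt.mpr (Fin.le_last j)), by simpa using h⟩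
    · refine ⟨i.castSucc, fun j hj => ?_, by simpa using ha⟩
      rcases Fin.eq_castSucc_or_eq_last j with ⟨j', rfl⟩ | rfl
      · have := hi j' (by exact_mod_cast hj)
        simpa using this
      · simp

/-- transfer counting along `snoc`. -/
lemma card_filter_snoc {s : ℕ} (P : (Fin (s+1) → V) → Prop) [DecidablePred P] :
    (univ.filter fun w : Fin (s+1) → V => P w).card =
      (univ.filter fun p : (Fin s → V) × V => P (Fin.snoc p.1 p.2)).card := by
  refine Finset.card_bij' (fun w _ => (Fin.init w, w (Fin.last s)))
    (fun p _ => Fin.snoc p.1 p.2) ?_ ?_ ?_ ?_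
  · intro w hw
    simp only [mem_filter, mem_univ, true_and] at hw ⊢
    rwa [Fin.snoc_init_self]
  · intro p hp
    simp only [mem_filter, mem_univ, true_and] at hp ⊢
    exact hp
  · intro w _
    exact Fin.snoc_init_self w
  · intro p _
    simp [Fin.init_snoc, Fin.snoc_last]

lemma card_filter_or_last {s : ℕ} (A : V → Prop) [DecidablePred A] (z : V) (hz : ¬ A z)
    (B : (Fin s → V) → Prop) [DecidablePred B] :
    (univ.filter fun p : (Fin s → V) × V => A p.2 ∨ (p.2 = z ∧ B p.1)).card =
      (univ.filter A).card * Fintype.card V ^ s + (univ.filter B).card := by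
  classical
  rw [Finset.filter_or, Finset.card_union_of_disjoint]
  · congr 1
    · have : (univ.filter fun p : (Fin s → V) × V => A p.2) = univ ×ˢ univ.filter A := by
        ext p; simp [Finset.mem_product]
      rw [this, Finset.card_product]
      simp [mul_comm, Fintype.card_fun]
    · have : (univ.filter fun p : (Fin s → V) × V => p.2 = z ∧ B p.1) =
          univ.filter B ×ˢ {z} := by
        ext ⟨w, c⟩; simp [Finset.mem_product, and_comm, eq_comm]
      rw [this, Finset.card_product]
      simp
  · rw [Finset.disjoint_filter]
    rintro p _ hA ⟨h2, _⟩
    exact hz (h2 ▸ hA)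

lemma card_Qtail (z : V) (s : ℕ) :
    (univ.filter fun w : Fin s → V => Qtail G z w).card =
      G.degree z * psi (Fintype.card V) s := by
  induction s with
  | zero =>
    have h0 : psi (Fintype.card V) 0 = 0 := by simp [psi]
    rw [h0, Nat.mul_zero, Finset.card_eq_zero, Finset.filter_eq_empty_iff]
    rintro w - ⟨i, -, -⟩
    exact i.elim0
  | succ s ih =>
    rw [card_filter_snoc]
    have : (univ.filter fun p : (Fin s → V) × V => Qtail G z (Fin.snoc p.1 p.2)) =
        univ.filter fun p : (Fin s → V) × V => G.Adj p.2 z ∨ (p.2 = z ∧ Qtail G z p.1) := by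
      apply Finset.filter_congr; intro p _; simp [Qtail_snoc]
    rw [this, card_filter_or_last (fun c => G.Adj c z) z (by simp) (Qtail G z), ih]
    have hdeg : (univ.filter fun c => G.Adj c z).card = G.degree z := by
      rw [← SimpleGraph.card_neighborFinset_eq_degree]
      congr 1; ext c; simp [SimpleGraph.adj_comm]
    rw [hdeg]
    simp only [psi, Finset.sum_range_succ, Nat.mul_add]
    ring

lemma card_not_Qtail (z : V) (s : ℕ) :
    (univ.filter fun w : Fin s → V => ¬ Qtail G z w).card + G.degree z * psi (Fintype.card V) s
      = Fintype.card V ^ s := by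
  rw [← card_Qtail G z s, Nat.add_comm, Finset.card_filter_add_card_filter_not]
  simp [Fintype.card_fun]

/-- the main word count: words of length `s+1` with `Q_y` and not `Q_x`. -/
lemma card_main (x y : V) (hxy : G.Adj x y) (s : ℕ) :
    ((univ.filter fun w : Fin (s+1) → V => Qtail G y w ∧ ¬ Qtail G x w).card : ℤ) =
      (Fintype.card V : ℤ) ^ s * ((G.degree y : ℤ) - tau G x y) -
        psi (Fintype.card V) s * G.degree x := by
  have key : ∀ (w : Fin s → V) (c : V),
      (Qtail G y (Fin.snoc w c) ∧ ¬ Qtail G x (Fin.snoc w c)) ↔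
        ((G.Adj c y ∧ ¬ G.Adj c x ∧ c ≠ x) ∨ (c = x ∧ ¬ Qtail G x w)) := by
    intro w c
    rw [Qtail_snoc, Qtail_snoc]
    by_cases hcx : c = x
    · subst hcx
      simp only [hxy, true_or, true_and, ne_eq, not_true_eq_false, and_false, false_and,
        false_or, G.irrefl, false_or, eq_self_iff_true]
    · by_cases hcy : c = y
      · subst hcy
        have : G.Adj c x := hxy.symm
        simp [this, G.irrefl, hcx]
      · simp only [hcx, hcy, false_and, or_false, and_true, ne_eq, not_false_iff]
  have hrw : (univ.filter fun w : Fin (s+1) → V => Qtail G y w ∧ ¬ Qtail G x w).card =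
      (univ.filter fun c : V => G.Adj c y ∧ ¬ G.Adj c x ∧ c ≠ x).card * Fintype.card V ^ s +
        (univ.filter fun w : Fin s → V => ¬ Qtail G x w).card := by
    rw [card_filter_snoc]
    have : (univ.filter fun p : (Fin s → V) × V =>
        Qtail G y (Fin.snoc p.1 p.2) ∧ ¬ Qtail G x (Fin.snoc p.1 p.2)) =
        univ.filter fun p : (Fin s → V) × V =>
          (G.Adj p.2 y ∧ ¬ G.Adj p.2 x ∧ p.2 ≠ x) ∨ (p.2 = x ∧ ¬ Qtail G x p.1) := by
      apply Finset.filter_congr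
      intro p _
      exact key p.1 p.2
    rw [this, card_filter_or_last (fun c => G.Adj c y ∧ ¬ G.Adj c x ∧ c ≠ x) x
      (by simp) (fun w => ¬ Qtail G x w)]
  have hS : (univ.filter fun c : V => G.Adj c y ∧ ¬ G.Adj c x ∧ c ≠ x).card
      + (tau G x y + 1) = G.degree y := by
    have h1 : (univ.filter fun c : V => G.Adj c y ∧ ¬ G.Adj c x ∧ c ≠ x) =
        G.neighborFinset y \ (G.neighborFinset x ∪ {x}) := by
      ext c
      simp only [mem_filter, mem_univ, true_and, Finset.mem_sdiff, Finset.mem_union,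
        SimpleGraph.mem_neighborFinset, Finset.mem_singleton]
      rw [G.adj_comm y c, G.adj_comm x c]
      tauto
    have h2 : G.neighborFinset y ∩ (G.neighborFinset x ∪ {x}) =
        (G.neighborFinset x ∩ G.neighborFinset y) ∪ {x} := by
      ext c
      simp only [Finset.mem_inter, Finset.mem_union, Finset.mem_singleton,
        SimpleGraph.mem_neighborFinset]
      constructor
      · rintro ⟨h, h' | rfl⟩
        · exact Or.inl ⟨h', h⟩
        · exact Or.inr rfl
      · rintro (⟨h', h⟩ | rfl)
        · exact ⟨h, Or.inl h'⟩
        · exact ⟨hxy.symm, Or.inr rfl⟩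
    have h3 := Finset.card_sdiff_add_card_inter (G.neighborFinset y)
      (G.neighborFinset x ∪ {x})
    rw [h2] at h3
    rw [Finset.card_union_of_disjoint (by simp [SimpleGraph.irrefl])] at h3
    rw [h1]
    rw [← SimpleGraph.card_neighborFinset_eq_degree, ← h3]
    simp [tau]
  have hN := card_not_Qtail G x s
  rw [hrw]
  push_cast
  have e1 : ((univ.filter fun c : V => G.Adj c y ∧ ¬ G.Adj c x ∧ c ≠ x).card : ℤ) =
      (G.degree y : ℤ) - tau G x y - 1 := by
    have := congrArg (fun k : ℕ => (k : ℤ)) hS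
    push_cast at this
    linarith
  have e2 : ((univ.filter fun w : Fin s → V => ¬ Qtail G x w).card : ℤ) =
      (Fintype.card V : ℤ) ^ s - G.degree x * psi (Fintype.card V) s := by
    have := congrArg (fun k : ℕ => (k : ℤ)) hN
    push_cast at this
    linarith
  rw [e1, e2]
  ring

/-- `u` has an "extra" neighbor besides the `d(u last)` obvious ones. -/
def extraP {m : ℕ} (u : Fin (m+1) → V) : Prop :=
  ∃ i : Fin (m+1), i ≠ Fin.last m ∧ (∀ j, i < j → u j = u (Fin.last m)) ∧
    G.Adj (u i) (u (Fin.last m))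

instance {m : ℕ} (u : Fin (m+1) → V) : Decidable (extraP G u) :=
  inferInstanceAs (Decidable (∃ i : Fin (m+1), i ≠ Fin.last m ∧
    (∀ j, i < j → u j = u (Fin.last m)) ∧ G.Adj (u i) (u (Fin.last m))))

/-- The extra neighbor of `u` corresponding to position `i`. -/
def nbr {m : ℕ} (u : Fin (m+1) → V) (i : Fin (m+1)) : Fin (m+1) → V :=
  fun j => if j < i then u j else if j = i then u (Fin.last m) else u i

lemma extra_unique {m : ℕ} (u : Fin (m+1) → V) {i i' : Fin (m+1)}
    (h1 : ∀ j, i < j → u j = u (Fin.last m)) (h2 : G.Adj (u i) (u (Fin.last m)))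
    (h1' : ∀ j, i' < j → u j = u (Fin.last m)) (h2' : G.Adj (u i') (u (Fin.last m))) :
    i = i' := by
  rcases lt_trichotomy i i' with h | h | h
  · exact absurd (h1 i' h) h2'.ne
  · exact h
  · exact absurd (h1' i h) h2.ne

lemma sier_adj_iff {m : ℕ} (u v : Fin (m+1) → V) :
    (sierpinskiGraph G (m+1)).Adj u v ↔
      (G.Adj (u (Fin.last m)) (v (Fin.last m)) ∧
        v = Function.update u (Fin.last m) (v (Fin.last m))) ∨
      (∃ i, i ≠ Fin.last m ∧ (∀ j, i < j → u j = u (Fin.last m)) ∧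
        G.Adj (u i) (u (Fin.last m)) ∧ v = nbr u i) := by
  constructor
  · rintro ⟨i, h1, h2, h3, h4⟩
    by_cases hiL : i = Fin.last m
    · subst hiL
      refine Or.inl ⟨h3, funext fun j => ?_⟩
      by_cases hj : j = Fin.last m
      · subst hj; rw [Function.update_self]
      · rw [Function.update_of_ne hj]
        exact (h1 j (lt_of_le_of_ne (Fin.le_last j) hj)).symm
    · have hiL' : i < Fin.last m := lt_of_le_of_ne (Fin.le_last i) hiL
      have hvi : v i = u (Fin.last m) := ((h4 _ hiL').1).symm
      refine Or.inr ⟨i, hiL, fun j hj => (h4 j hj).1.trans hvi, hvi ▸ h3, funext fun j => ?_⟩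
      rcases lt_trichotomy j i with h | h | h
      · rw [nbr, if_pos h]; exact (h1 j h).symm
      · subst h; rw [nbr]; simp only [lt_irrefl, if_false, if_pos rfl]; exact hvi
      · rw [nbr, if_neg (not_lt.mpr h.le), if_neg (ne_of_gt h)]; exact (h4 j h).2
  · rintro (⟨ha, hv⟩ | ⟨i, hiL, htail, ha, hv⟩)
    · refine ⟨Fin.last m, fun j hj => ?_, ha.ne, ha,
        fun j hj => absurd hj (not_lt.mpr (Fin.le_last j))⟩
      rw [hv, Function.update_of_ne (ne_of_lt hj)]
    · have hnbri : nbr u i i = u (Fin.last m) := by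
        rw [nbr]; simp
      refine ⟨i, fun j hj => ?_, ?_, ?_, fun j hj => ⟨?_, ?_⟩⟩
      · rw [hv, nbr, if_pos hj]
      · rw [hv, hnbri]; exact ha.ne
      · rw [hv, hnbri]; exact ha
      · rw [hv, hnbri]; exact htail j hj
      · rw [hv, nbr, if_neg (not_lt.mpr hj.le), if_neg (ne_of_gt hj)]

lemma sier_degree {m : ℕ} (u : Fin (m+1) → V) :
    (sierpinskiGraph G (m+1)).degree u =
      G.degree (u (Fin.last m)) + (if extraP G u then 1 else 0) := by
  classical
  rw [← SimpleGraph.card_neighborFinset_eq_degree, ← SimpleGraph.card_neighborFinset_eq_degree]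
  have hnb : (sierpinskiGraph G (m+1)).neighborFinset u =
      (univ.filter fun v => (G.Adj (u (Fin.last m)) (v (Fin.last m)) ∧
        v = Function.update u (Fin.last m) (v (Fin.last m)))) ∪
      (univ.filter fun v => ∃ i, i ≠ Fin.last m ∧ (∀ j, i < j → u j = u (Fin.last m)) ∧
        G.Adj (u i) (u (Fin.last m)) ∧ v = nbr u i) := by
    ext v
    rw [SimpleGraph.mem_neighborFinset, sier_adj_iff]
    simp only [Finset.mem_union, mem_filter, mem_univ, true_and]
  rw [hnb, Finset.card_union_of_disjoint]
  · congr 1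
    · refine Finset.card_bij' (fun v _ => v (Fin.last m))
        (fun z _ => Function.update u (Fin.last m) z) ?_ ?_ ?_ ?_
      · intro v hv
        simp only [mem_filter, mem_univ, true_and] at hv
        rw [SimpleGraph.mem_neighborFinset]
        exact hv.1
      · intro z hz
        rw [SimpleGraph.mem_neighborFinset] at hz
        rw [mem_filter]
        refine ⟨mem_univ _, ?_, ?_⟩
        · simpa using hz
        · simp
      · intro v hv
        simp only [mem_filter, mem_univ, true_and] at hv
        exact hv.2.symm
      · intro z _
        exact Function.update_self _ _ _
    · by_cases h : extraP G u
      · obtain ⟨i₀, hi₀L, hi₀t, hi₀a⟩ := h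
        rw [if_pos ⟨i₀, hi₀L, hi₀t, hi₀a⟩]
        rw [Finset.card_eq_one]
        refine ⟨nbr u i₀, ?_⟩
        ext v
        simp only [mem_filter, mem_univ, true_and, Finset.mem_singleton]
        constructor
        · rintro ⟨i, hiL, ht, hA, rfl⟩
          rw [extra_unique G u ht hA hi₀t hi₀a]
        · rintro rfl
          exact ⟨i₀, hi₀L, hi₀t, hi₀a, rfl⟩
      · rw [if_neg h, Finset.card_eq_zero, Finset.filter_eq_empty_iff]
        rintro v - ⟨i, hiL, ht, hA, rfl⟩
        exact h ⟨i, hiL, ht, hA⟩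
  · rw [Finset.disjoint_filter]
    rintro v - ⟨hA1, hv1⟩ ⟨i, hiL, ht, hA, hv2⟩
    have h1 : v i = u i := by
      rw [hv1, Function.update_of_ne hiL]
    have h2 : v i = u (Fin.last m) := by
      rw [hv2, nbr]; simp
    exact hA.ne (h1.symm.trans h2)

lemma extraP_iff_Qtail {m : ℕ} (u : Fin (m+1) → V) :
    extraP G u ↔ Qtail G (u (Fin.last m)) (Fin.init u) := by
  constructor
  · rintro ⟨i, hiL, ht, hA⟩
    rcases Fin.eq_castSucc_or_eq_last i with ⟨i', rfl⟩ | rfl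
    · exact ⟨i', fun j hj => ht j.castSucc (by exact_mod_cast hj), hA⟩
    · exact absurd rfl hiL
  · rintro ⟨i, ht, hA⟩
    refine ⟨i.castSucc, (Fin.castSucc_lt_last i).ne, fun j hj => ?_, hA⟩
    rcases Fin.eq_castSucc_or_eq_last j with ⟨j', rfl⟩ | rfl
    · exact ht j' (by exact_mod_cast hj)
    · rfl

end Aux

theorem copyCount_deg_degSucc {n : ℕ} (hn : 2 ≤ n) (G : SimpleGraph (Fin n))
    [DecidableRel G.Adj] (x y : Fin n) (hxy : G.Adj x y) (t : ℕ) (ht : 2 ≤ t) :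
    (copyCount G t x y (G.degree x) (G.degree y + 1) : ℤ) =
      (n : ℤ) ^ (t - 2) * ((G.degree y : ℤ) - tau G x y) - psi n (t - 2) * G.degree x := by
  classical
  obtain ⟨s, rfl⟩ : ∃ s, t = s + 2 := ⟨t - 2, by omega⟩
  simp only [Nat.add_sub_cancel]
  have memT : ∀ u v : Fin (s+2) → Fin n,
      (isCopy x y u v ∧ (sierpinskiGraph G (s+2)).degree u = G.degree x ∧
        (sierpinskiGraph G (s+2)).degree v = G.degree y + 1)
      ↔ (u (Fin.last (s+1)) = x ∧ ¬ extraP G u ∧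
          extraP G (Function.update u (Fin.last (s+1)) y) ∧
          v = Function.update u (Fin.last (s+1)) y) := by
    intro u v
    constructor
    · rintro ⟨⟨i, h1, h2, h3, h4⟩, hdu, hdv⟩
      by_cases hiL : i = Fin.last (s+1)
      · subst hiL
        have hveq : v = Function.update u (Fin.last (s+1)) y := by
          funext j
          by_cases hj : j = Fin.last (s+1)
          · subst hj; rw [Function.update_self]; exact h3
          · rw [Function.update_of_ne hj]
            exact (h1 j (lt_of_le_of_ne (Fin.le_last j) hj)).symm
        have hnex : ¬ extraP G u := by
          intro h
          rw [sier_degree, h2, if_pos h] at hdu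
          omega
        have hex : extraP G (Function.update u (Fin.last (s+1)) y) := by
          by_contra h
          rw [hveq, sier_degree, Function.update_self, if_neg h] at hdv
          omega
        exact ⟨h2, hnex, hex, hveq⟩
      · exfalso
        have hiL' : i < Fin.last (s+1) := lt_of_le_of_ne (Fin.le_last i) hiL
        have huL : u (Fin.last (s+1)) = y := (h4 _ hiL').1
        have hvL : v (Fin.last (s+1)) = x := (h4 _ hiL').2
        have hexu : extraP G u :=
          ⟨i, hiL, fun j hj => (h4 j hj).1.trans huL.symm, by rw [h2, huL]; exact hxy⟩
        have hexv : extraP G v :=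
          ⟨i, hiL, fun j hj => (h4 j hj).2.trans hvL.symm, by rw [h3, hvL]; exact hxy.symm⟩
        rw [sier_degree, huL, if_pos hexu] at hdu
        rw [sier_degree, hvL, if_pos hexv] at hdv
        omega
    · rintro ⟨huL, hnex, hex, rfl⟩
      refine ⟨⟨Fin.last (s+1), fun j hj => (Function.update_of_ne (ne_of_lt hj) _ _).symm,
        huL, Function.update_self _ _ _,
        fun j hj => absurd hj (not_lt.mpr (Fin.le_last j))⟩, ?_, ?_⟩
      · rw [sier_degree, huL, if_neg hnex]
        omega
      · rw [sier_degree, Function.update_self, if_pos hex]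
  have step1 : copyCount G (s+2) x y (G.degree x) (G.degree y + 1) =
      (univ.filter fun u : Fin (s+2) → Fin n => u (Fin.last (s+1)) = x ∧ ¬ extraP G u ∧
        extraP G (Function.update u (Fin.last (s+1)) y)).card := by
    rw [copyCount]
    refine Finset.card_bij' (fun p _ => p.1)
      (fun u _ => (u, Function.update u (Fin.last (s+1)) y)) ?_ ?_ ?_ ?_
    · intro p hp
      rw [mem_filter] at hp ⊢
      have h := (memT p.1 p.2).mp hp.2
      exact ⟨mem_univ _, h.1, h.2.1, h.2.2.1⟩
    · intro u hu
      rw [mem_filter] at hu ⊢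
      exact ⟨mem_univ _, (memT u _).mpr ⟨hu.2.1, hu.2.2.1, hu.2.2.2, rfl⟩⟩
    · intro p hp
      rw [mem_filter] at hp
      have h := (memT p.1 p.2).mp hp.2
      exact Prod.ext rfl h.2.2.2.symm
    · intro u hu
      rfl
  have hinit : ∀ u : Fin (s+2) → Fin n,
      Fin.init (Function.update u (Fin.last (s+1)) y) = Fin.init u :=
    fun u => funext fun j => Function.update_of_ne (Fin.castSucc_lt_last j).ne _ _
  have step2 : (univ.filter fun u : Fin (s+2) → Fin n => u (Fin.last (s+1)) = x ∧
        ¬ extraP G u ∧ extraP G (Function.update u (Fin.last (s+1)) y)).card =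
      (univ.filter fun w : Fin (s+1) → Fin n => Qtail G y w ∧ ¬ Qtail G x w).card := by
    refine Finset.card_bij' (fun u _ => Fin.init u) (fun w _ => Fin.snoc w x) ?_ ?_ ?_ ?_
    · intro u hu
      rw [mem_filter] at hu ⊢
      obtain ⟨-, huL, hnex, hex⟩ := hu
      refine ⟨mem_univ _, ?_, ?_⟩
      · have h := (extraP_iff_Qtail G _).mp hex
        rwa [Function.update_self, hinit u] at h
      · intro h
        exact hnex ((extraP_iff_Qtail G u).mpr (by rwa [huL]))
    · intro w hw
      rw [mem_filter] at hw ⊢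
      obtain ⟨-, hQy, hQx⟩ := hw
      refine ⟨mem_univ _, Fin.snoc_last _ _, ?_, ?_⟩
      · intro h
        have h' := (extraP_iff_Qtail G _).mp h
        simp only [Fin.snoc_last, Fin.init_snoc] at h'
        exact hQx h'
      · refine (extraP_iff_Qtail G _).mpr ?_
        rw [Function.update_self, hinit, Fin.init_snoc]
        exact hQy
    · intro u hu
      rw [mem_filter] at hu
      have h := Fin.snoc_init_self u
      rwa [hu.2.1] at h
    · intro w hw
      simp
  have hmain := card_main G x y hxy s
  rw [Fintype.card_fin] at hmain
  rw [step1, step2]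
  exact hmain
end

section
/- For any real number α and any integers t, n ≥ 2, the general Randić index of the Sierpiński graph S(K_n,t) built from the complete graph K_n satisfies R_α(S(K_n,t)) = n^{α+1}(n−1)^{α+1} + (n^{2α+t+1} − 2n^{2(α+1)} + n^{2α+1})/2. -/
open Finset

namespace RS

variable {n s : ℕ}

abbrev SG (n s : ℕ) : SimpleGraph (Fin (s+1) → Fin n) := sierpinskiGraph ⊤ (s+1)

lemma adj_iff {u v : Fin (s+1) → Fin n} :
    (SG n s).Adj u v ↔ ∃ i, (∀ j, j < i → u j = v j) ∧ u i ≠ v i ∧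
      ∀ j, i < j → u j = v i ∧ v j = u i := by
  simp only [SG, sierpinskiGraph, SimpleGraph.top_adj]
  exact ⟨fun ⟨i, a, b, _, d⟩ => ⟨i, a, b, d⟩, fun ⟨i, a, b, d⟩ => ⟨i, a, b, b, d⟩⟩

/-- The largest index where `u` differs from its last value, for nonconstant `u`. -/
noncomputable def mIdx (u : Fin (s+1) → Fin n) : Fin (s+1) :=
  if h : (Finset.univ.filter (fun j => u j ≠ u (Fin.last s))).Nonempty then
    (Finset.univ.filter (fun j => u j ≠ u (Fin.last s))).max' h else 0

lemma mIdx_spec {u : Fin (s+1) → Fin n} (h : ∃ j, u j ≠ u (Fin.last s)) :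
    u (mIdx u) ≠ u (Fin.last s) ∧ ∀ j, mIdx u < j → u j = u (Fin.last s) := by
  have hne : (Finset.univ.filter (fun j => u j ≠ u (Fin.last s))).Nonempty := by
    obtain ⟨j, hj⟩ := h; exact ⟨j, by simp [hj]⟩
  rw [mIdx, dif_pos hne]
  constructor
  · have := Finset.max'_mem _ hne
    simpa using this
  · intro j hj
    by_contra hne'
    exact absurd (Finset.le_max' _ j (by simp [hne'])) (not_le.mpr hj)

lemma mIdx_lt_last {u : Fin (s+1) → Fin n} (h : ∃ j, u j ≠ u (Fin.last s)) :
    mIdx u < Fin.last s :=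
  lt_of_le_of_ne (Fin.le_last _) (fun he => (mIdx_spec h).1 (by rw [he]))

/-- The extra neighbor of a nonconstant vertex. -/
noncomputable def sp (u : Fin (s+1) → Fin n) : Fin (s+1) → Fin n :=
  fun j => if j < mIdx u then u j else if j = mIdx u then u (Fin.last s) else u (mIdx u)

lemma neighborFinset_eq_const {u : Fin (s+1) → Fin n} (hc : ∀ j, u j = u (Fin.last s)) :
    (SG n s).neighborFinset u =
      (Finset.univ.filter (· ≠ u (Fin.last s))).image
        (fun c => Function.update u (Fin.last s) c) := by
  ext v
  rw [SimpleGraph.mem_neighborFinset, adj_iff]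
  constructor
  · rintro ⟨i, h1, h2, h4⟩
    rcases eq_or_lt_of_le (Fin.le_last i) with hi | hi
    · subst hi
      refine Finset.mem_image.mpr ⟨v (Fin.last s), by simp [Ne.symm h2], ?_⟩
      funext j
      rcases eq_or_lt_of_le (Fin.le_last j) with hj | hj
      · rw [hj, Function.update_self]
      · rw [Function.update_of_ne (Fin.ne_of_lt hj)]
        exact h1 j hj
    · exact absurd ((hc i).trans (h4 (Fin.last s) hi).1) h2
  · rintro hv
    obtain ⟨c, hc', rfl⟩ := Finset.mem_image.mp hv
    simp only [Finset.mem_filter, Finset.mem_univ, true_and] at hc'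
    refine ⟨Fin.last s, fun j hj => (Function.update_of_ne (Fin.ne_of_lt hj) _ _).symm,
      by simpa using Ne.symm hc', fun j hj => absurd hj (not_lt.mpr (Fin.le_last j))⟩

lemma neighborFinset_eq_nonconst {u : Fin (s+1) → Fin n} (h : ∃ j, u j ≠ u (Fin.last s)) :
    (SG n s).neighborFinset u =
      insert (sp u) ((Finset.univ.filter (· ≠ u (Fin.last s))).image
        (fun c => Function.update u (Fin.last s) c)) := by
  obtain ⟨hm1, hm2⟩ := mIdx_spec h
  have hmlt := mIdx_lt_last h
  ext v
  rw [SimpleGraph.mem_neighborFinset, adj_iff, Finset.mem_insert]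
  constructor
  · rintro ⟨i, h1, h2, h4⟩
    rcases eq_or_lt_of_le (Fin.le_last i) with hi | hi
    · subst hi
      refine Or.inr (Finset.mem_image.mpr ⟨v (Fin.last s), by simp [Ne.symm h2], ?_⟩)
      funext j
      rcases eq_or_lt_of_le (Fin.le_last j) with hj | hj
      · rw [hj, Function.update_self]
      · rw [Function.update_of_ne (Fin.ne_of_lt hj)]
        exact h1 j hj
    · -- i < last : v = sp u, and i = mIdx u
      have hlast : u (Fin.last s) = v i := (h4 (Fin.last s) hi).1
      have himem : i ∈ Finset.univ.filter (fun j => u j ≠ u (Fin.last s)) := by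
        simp only [Finset.mem_filter, Finset.mem_univ, true_and]
        rw [hlast]; exact h2
      have hile : i ≤ mIdx u := by
        rw [mIdx, dif_pos ⟨i, himem⟩]
        exact Finset.le_max' _ i himem
      have him : i = mIdx u := by
        rcases eq_or_lt_of_le hile with he | hlt
        · exact he
        · exact absurd ((h4 (mIdx u) hlt).1.trans hlast.symm) hm1
      subst him
      left
      funext j
      by_cases hj1 : j < mIdx u
      · rw [sp, if_pos hj1]; exact (h1 j hj1).symm
      by_cases hj2 : j = mIdx u
      · subst hj2; rw [sp, if_neg hj1, if_pos rfl, hlast]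
      · have hjgt : mIdx u < j := lt_of_le_of_ne (not_lt.mp hj1) (Ne.symm hj2)
        rw [sp, if_neg hj1, if_neg hj2]
        exact (h4 j hjgt).2
  · rintro (rfl | hv)
    · refine ⟨mIdx u, fun j hj => by rw [sp, if_pos hj], ?_, fun j hj => ?_⟩
      · rw [sp, if_neg (lt_irrefl _), if_pos rfl]; exact hm1
      · constructor
        · rw [sp, if_neg (lt_irrefl _), if_pos rfl]; exact hm2 j hj
        · rw [sp, if_neg (not_lt.mpr hj.le), if_neg (Fin.ne_of_gt hj)]
    · obtain ⟨c, hc', rfl⟩ := Finset.mem_image.mp hv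
      simp only [Finset.mem_filter, Finset.mem_univ, true_and] at hc'
      refine ⟨Fin.last s, fun j hj => (Function.update_of_ne (Fin.ne_of_lt hj) _ _).symm,
        by simpa using Ne.symm hc', fun j hj => absurd hj (not_lt.mpr (Fin.le_last j))⟩


lemma degree_const {u : Fin (s+1) → Fin n} (hc : ∀ j, u j = u (Fin.last s)) :
    (SG n s).degree u = n - 1 := by
  rw [← SimpleGraph.card_neighborFinset_eq_degree, neighborFinset_eq_const hc,
    Finset.card_image_of_injective _ (Function.update_injective u _)]
  rw [Finset.filter_ne', Finset.card_erase_of_mem (Finset.mem_univ _), Finset.card_univ,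
    Fintype.card_fin]

lemma degree_nonconst {u : Fin (s+1) → Fin n} (h : ∃ j, u j ≠ u (Fin.last s)) (hn : 1 ≤ n) :
    (SG n s).degree u = n := by
  rw [← SimpleGraph.card_neighborFinset_eq_degree, neighborFinset_eq_nonconst h]
  have hnm : sp u ∉ (Finset.univ.filter (· ≠ u (Fin.last s))).image
      (fun c => Function.update u (Fin.last s) c) := by
    rw [Finset.mem_image]
    rintro ⟨c, -, hcu⟩
    have h1 : sp u (mIdx u) = u (Fin.last s) := by
      rw [sp, if_neg (lt_irrefl _), if_pos rfl]
    have h2 : Function.update u (Fin.last s) c (mIdx u) = u (mIdx u) :=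
      Function.update_of_ne (Fin.ne_of_lt (mIdx_lt_last h)) _ _
    rw [hcu, h1] at h2
    exact (mIdx_spec h).1 h2.symm
  rw [Finset.card_insert_of_notMem hnm,
    Finset.card_image_of_injective _ (Function.update_injective u _),
    Finset.filter_ne', Finset.card_erase_of_mem (Finset.mem_univ _), Finset.card_univ,
    Fintype.card_fin]
  omega

/-- The finset of constant vertices. -/
def constV (n s : ℕ) : Finset (Fin (s+1) → Fin n) :=
  Finset.univ.filter (fun u => ∀ j, u j = u (Fin.last s))

lemma constV_eq : constV n s = Finset.univ.image (fun a : Fin n => Function.const _ a) := by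
  ext u
  simp only [constV, Finset.mem_filter, Finset.mem_univ, true_and, Finset.mem_image]
  constructor
  · intro h
    exact ⟨u (Fin.last s), funext fun j => (h j).symm⟩
  · rintro ⟨a, rfl⟩
    intro j; rfl

lemma card_constV (n s : ℕ) : (constV n s).card = n := by
  rw [constV_eq, Finset.card_image_of_injective _ (fun a b hab => congrFun hab 0),
    Finset.card_univ, Fintype.card_fin]


lemma not_adj_const (hs : 0 < s) {u v : Fin (s+1) → Fin n}
    (hu : u ∈ constV n s) (hv : v ∈ constV n s) : ¬ (SG n s).Adj u v := by
  simp only [constV, Finset.mem_filter, Finset.mem_univ, true_and] at hu hv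
  rw [adj_iff]
  rintro ⟨i, h1, h2, h4⟩
  rcases eq_or_lt_of_le (Fin.le_last i) with hi | hi
  · have h0 : (0 : Fin (s+1)) < i := by
      rw [hi]; exact Fin.lt_last_iff_ne_last.mpr (by
        simp [Fin.ext_iff]; omega)
    have := h1 0 h0
    rw [hu 0, hv 0] at this
    exact h2 (by rw [hu i, hv i, this])
  · have := (h4 (Fin.last s) hi).1
    exact h2 ((hu i).trans this)

/-- Edges incident to some constant vertex. -/
def constE (n s : ℕ) : Finset (Sym2 (Fin (s+1) → Fin n)) :=
  (constV n s).biUnion (fun a => (SG n s).incidenceFinset a)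

lemma constE_card (hs : 0 < s) (hn : 1 ≤ n) : (constE n s).card = n * (n - 1) := by
  rw [constE, Finset.card_biUnion]
  · rw [Finset.sum_congr rfl (fun a ha => ?_), Finset.sum_const, card_constV, smul_eq_mul]
    rw [SimpleGraph.card_incidenceFinset_eq_degree]
    simp only [constV, Finset.mem_filter, Finset.mem_univ, true_and] at ha
    exact degree_const ha
  · intro a ha b hb hab
    rw [Function.onFun, Finset.disjoint_left]
    intro e hea heb
    rw [SimpleGraph.mem_incidenceFinset] at hea heb
    exact not_adj_const hs ha hb
      (((Sym2.mem_and_mem_iff hab).mp ⟨hea.2, heb.2⟩ ▸ hea.1 : s(a,b) ∈ (SG n s).edgeSet))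

lemma mem_constE_iff (e : Sym2 (Fin (s+1) → Fin n)) (he : e ∈ (SG n s).edgeFinset) :
    e ∈ constE n s ↔ ∃ a ∈ constV n s, a ∈ e := by
  simp only [constE, Finset.mem_biUnion, SimpleGraph.mem_incidenceFinset,
    SimpleGraph.incidenceSet]
  rw [SimpleGraph.mem_edgeFinset] at he
  constructor
  · rintro ⟨a, ha, -, hae⟩; exact ⟨a, ha, hae⟩
  · rintro ⟨a, ha, hae⟩; exact ⟨a, ha, he, hae⟩

lemma sum_degrees (hn : 1 ≤ n) :
    ∑ u, (SG n s).degree u = n * (n - 1) + (n ^ (s+1) - n) * n := by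
  classical
  rw [← Finset.sum_filter_add_sum_filter_not Finset.univ
    (fun u => ∀ j, u j = u (Fin.last s))]
  have h1 : ∀ u ∈ Finset.univ.filter (fun u : Fin (s+1) → Fin n => ∀ j, u j = u (Fin.last s)),
      (SG n s).degree u = n - 1 := fun u hu =>
    degree_const (by simpa [constV] using hu)
  have h2 : ∀ u ∈ Finset.univ.filter
      (fun u : Fin (s+1) → Fin n => ¬ ∀ j, u j = u (Fin.last s)),
      (SG n s).degree u = n := fun u hu => by
    simp only [Finset.mem_filter, Finset.mem_univ, true_and, not_forall] at hu
    exact degree_nonconst hu hn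
  rw [Finset.sum_congr rfl h1, Finset.sum_congr rfl h2, Finset.sum_const, Finset.sum_const,
    smul_eq_mul, smul_eq_mul]
  have hc : (Finset.univ.filter (fun u : Fin (s+1) → Fin n =>
      ∀ j, u j = u (Fin.last s))).card = n := card_constV n s
  have hcc : (Finset.univ.filter (fun u : Fin (s+1) → Fin n =>
      ¬ ∀ j, u j = u (Fin.last s))).card = n ^ (s+1) - n := by
    rw [Finset.filter_not, Finset.card_sdiff_of_subset (Finset.filter_subset _ _), hc, Finset.card_univ,
      Fintype.card_fun, Fintype.card_fin, Fintype.card_fin]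
  rw [hc, hcc]

lemma card_edgeFinset_eq (hn : 1 ≤ n) :
    2 * ((SG n s).edgeFinset.card) = n ^ (s+2) - n := by
  rw [← SimpleGraph.sum_degrees_eq_twice_card_edges, sum_degrees hn]
  have h1 : n ≤ n ^ (s+1) := Nat.le_self_pow (by omega) n
  have h2 : n ≤ n ^ (s+2) := Nat.le_self_pow (by omega) n
  zify [hn, h1, h2]
  ring


lemma randic_eq {V : Type*} [Fintype V] [DecidableEq V] (G : SimpleGraph V)
    [DecidableRel G.Adj] (α : ℝ) :
    randic G α = ∑ e ∈ G.edgeFinset,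
      Sym2.lift ⟨fun u v => ((G.degree u : ℝ) * (G.degree v : ℝ)) ^ α,
        fun u v => by dsimp only; rw [mul_comm]⟩ e := by
  rw [randic]
  congr!

lemma constE_subset : constE n s ⊆ (SG n s).edgeFinset := by
  intro e he
  rw [constE, Finset.mem_biUnion] at he
  obtain ⟨a, -, he⟩ := he
  rw [SimpleGraph.mem_incidenceFinset] at he
  exact SimpleGraph.mem_edgeFinset.mpr he.1

lemma valA (hs : 0 < s) (hn : 1 ≤ n) (α : ℝ) :
    ∀ e ∈ constE n s,
      Sym2.lift ⟨fun u v => (((SG n s).degree u : ℝ) * ((SG n s).degree v : ℝ)) ^ α,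
        fun u v => by dsimp only; rw [mul_comm]⟩ e = (((n:ℝ) - 1) * n) ^ α := by
  intro e he
  have he1 := constE_subset he
  rw [mem_constE_iff e he1] at he
  induction e using Sym2.ind with
  | _ u v =>
    have hadj : (SG n s).Adj u v := by
      rw [SimpleGraph.mem_edgeFinset, SimpleGraph.mem_edgeSet] at he1; exact he1
    obtain ⟨a, ha, hae⟩ := he
    have key : ∀ x y : Fin (s+1) → Fin n, (SG n s).Adj x y → x ∈ constV n s →
        ((SG n s).degree x : ℝ) * ((SG n s).degree y : ℝ) = ((n:ℝ) - 1) * n := by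
      intro x y hxy hx
      have hy : y ∉ constV n s := fun hyc => not_adj_const hs hx hyc hxy
      simp only [constV, Finset.mem_filter, Finset.mem_univ, true_and, not_forall] at hx hy
      rw [degree_const hx, degree_nonconst hy hn]
      push_cast [Nat.cast_sub hn]
      ring
    rw [Sym2.mem_iff] at hae
    rcases hae with rfl | rfl
    · rw [Sym2.lift_mk]
      dsimp only
      rw [key a v hadj ha]
    · rw [Sym2.lift_mk]
      dsimp only
      rw [mul_comm ((SG n s).degree u : ℝ), key a u hadj.symm ha]

lemma valB (hs : 0 < s) (hn : 1 ≤ n) (α : ℝ) :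
    ∀ e ∈ (SG n s).edgeFinset.filter (· ∉ constE n s),
      Sym2.lift ⟨fun u v => (((SG n s).degree u : ℝ) * ((SG n s).degree v : ℝ)) ^ α,
        fun u v => by dsimp only; rw [mul_comm]⟩ e = ((n:ℝ) * n) ^ α := by
  intro e he
  rw [Finset.mem_filter] at he
  obtain ⟨he1, he2⟩ := he
  rw [mem_constE_iff e he1] at he2
  push_neg at he2
  induction e using Sym2.ind with
  | _ u v =>
    have hu : u ∉ constV n s := fun h => he2 u h (Sym2.mem_mk_left u v)
    have hv : v ∉ constV n s := fun h => he2 v h (Sym2.mem_mk_right u v)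
    simp only [constV, Finset.mem_filter, Finset.mem_univ, true_and, not_forall] at hu hv
    rw [Sym2.lift_mk]
    dsimp only
    rw [degree_nonconst hu hn, degree_nonconst hv hn]

end RS

theorem randic_sierpinski_complete {n t : ℕ} (hn : 2 ≤ n) (ht : 2 ≤ t) (α : ℝ) :
    randic (sierpinskiGraph (⊤ : SimpleGraph (Fin n)) t) α =
      (n : ℝ) ^ (α + 1) * ((n : ℝ) - 1) ^ (α + 1) +
        ((n : ℝ) ^ (2 * α + (t : ℝ) + 1) - 2 * (n : ℝ) ^ (2 * (α + 1)) +
          (n : ℝ) ^ (2 * α + 1)) / 2 := by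
  obtain ⟨s, rfl⟩ : ∃ s, t = s + 1 := ⟨t - 1, by omega⟩
  have hs : 0 < s := by omega
  have hn1 : 1 ≤ n := by omega
  rw [RS.randic_eq]
  rw [← Finset.sum_filter_add_sum_filter_not ((RS.SG n s).edgeFinset) (· ∈ RS.constE n s)]
  have hfil : (RS.SG n s).edgeFinset.filter (· ∈ RS.constE n s) = RS.constE n s := by
    ext e
    simp only [Finset.mem_filter]
    exact ⟨fun h => h.2, fun h => ⟨RS.constE_subset h, h⟩⟩
  rw [Finset.sum_congr hfil (RS.valA hs hn1 α),
    Finset.sum_congr rfl (RS.valB hs hn1 α),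
    Finset.sum_const, Finset.sum_const, nsmul_eq_mul, nsmul_eq_mul]
  -- cardinalities
  have hcard1 : (RS.constE n s).card = n * (n - 1) := RS.constE_card hs hn1
  have hcard2 := Finset.card_filter_add_card_filter_not
    (s := (RS.SG n s).edgeFinset) (p := (· ∈ RS.constE n s))
  rw [hfil, hcard1] at hcard2
  have hE := RS.card_edgeFinset_eq (n := n) (s := s) hn1
  set X := ((RS.SG n s).edgeFinset.filter (· ∉ RS.constE n s)).card with hXdef
  have hnpow : n ≤ n ^ (s + 2) := Nat.le_self_pow (by omega) n
  have hN : (0:ℝ) < n := by positivity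
  have hN1 : (0:ℝ) < (n:ℝ) - 1 := by
    have : (2:ℝ) ≤ n := by exact_mod_cast hn
    linarith
  have hXr : 2 * (X : ℝ) = (n:ℝ) ^ (s+2) - n - 2 * ((n:ℝ) * ((n:ℝ) - 1)) := by
    have h1 : 2 * (n * (n-1) + X) = n ^ (s+2) - n := by rw [hcard2]; exact hE
    have h2 := congrArg (fun m : ℕ => (m : ℝ)) h1
    push_cast [Nat.cast_sub hnpow, Nat.cast_sub hn1] at h2
    linarith
  rw [hcard1]
  have e0 : (((n:ℝ) - 1) * n) ^ α = ((n:ℝ)-1)^α * (n:ℝ)^α := Real.mul_rpow hN1.le hN.le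
  have e0' : ((n:ℝ) * n) ^ α = (n:ℝ)^α * (n:ℝ)^α := Real.mul_rpow hN.le hN.le
  have e1 : (n:ℝ) ^ (α + 1) = (n:ℝ)^α * n := Real.rpow_add_one hN.ne' α
  have e2 : ((n:ℝ) - 1) ^ (α + 1) = ((n:ℝ)-1)^α * ((n:ℝ)-1) := Real.rpow_add_one hN1.ne' α
  have e3 : (n:ℝ) ^ (2*α + ((s+1:ℕ):ℝ) + 1) = (n:ℝ)^α * ((n:ℝ)^α * (n:ℝ)^(s+2)) := by
    have h : 2*α + ((s+1:ℕ):ℝ) + 1 = α + (α + ((s+2:ℕ):ℝ)) := by push_cast; ring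
    rw [h, Real.rpow_add hN, Real.rpow_add hN, Real.rpow_natCast]
  have e4 : (n:ℝ) ^ (2*(α+1)) = (n:ℝ)^α * ((n:ℝ)^α * (n:ℝ)^(2:ℕ)) := by
    have h : 2*(α+1) = α + (α + ((2:ℕ):ℝ)) := by push_cast; ring
    rw [h, Real.rpow_add hN, Real.rpow_add hN, Real.rpow_natCast]
  have e5 : (n:ℝ) ^ (2*α + 1) = (n:ℝ)^α * ((n:ℝ)^α * (n:ℝ)) := by
    have h : 2*α+1 = α + (α + (1:ℝ)) := by ring
    rw [h, Real.rpow_add hN, Real.rpow_add hN, Real.rpow_one]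
  rw [e0, e0', e1, e2, e3, e4, e5]
  push_cast [Nat.cast_sub hn1]
  linear_combination ((n:ℝ)^α * (n:ℝ)^α / 2) * hXr
end

section
/- For any real number α and any integers t ≥ 2 and n ≥ 4, the general Randić index of the Sierpiński graph S(C_n,t) built from the cycle C_n satisfies R_α(S(C_n,t)) = 4^α·n^{t−1}(n−4) + 4·6^α·(n^{t−1} − n·ψ(t−2)) + 9^α·n·(ψ(t−1) + 4ψ(t−2)). -/
open Finset

/-! ### Auxiliary development -/

namespace RSC

open Fin.CommRing

/-! #### Arithmetic in `Fin (N+4)` -/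

lemma fin1ne {N : ℕ} : (1 : Fin (N+4)) ≠ 0 := one_ne_zero

lemma fin2ne {N : ℕ} : (1+1 : Fin (N+4)) ≠ 0 := by
  intro h
  have h2 := congrArg Fin.val h
  rw [Fin.val_add] at h2
  simp only [Fin.val_one, Fin.val_zero, Nat.mod_eq_of_lt (show 1+1 < N+4 by omega)] at h2
  omega

lemma fin3ne {N : ℕ} : (1+1+1 : Fin (N+4)) ≠ 0 := by
  intro h
  have h2 := congrArg Fin.val h
  rw [Fin.val_add, Fin.val_add] at h2
  simp only [Fin.val_one, Fin.val_zero, Nat.mod_eq_of_lt (show 1+1 < N+4 by omega),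
    Nat.mod_eq_of_lt (show 1+1+1 < N+4 by omega)] at h2
  omega

/-- Adjacency in the cycle graph `C_{N+4}`. -/
lemma cadj {N : ℕ} (a b : Fin (N+4)) :
    (SimpleGraph.cycleGraph (N+4)).Adj a b ↔ b = a + 1 ∨ b = a - 1 := by
  rw [SimpleGraph.cycleGraph_adj (n := N+2)]
  constructor
  · rintro (h | h)
    · right; rw [← h]; exact (sub_sub_cancel a b).symm
    · left; rw [← h]; ring
  · rintro (h | h)
    · right; rw [h]; ring
    · left; rw [h]; exact sub_sub_cancel a 1

lemma cycle_degree {N : ℕ} (a : Fin (N+4)) :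
    (SimpleGraph.cycleGraph (N+4)).degree a = 2 :=
  SimpleGraph.cycleGraph_degree_three_le (n := N+1) (v := a)

/-! #### The "extreme word" predicate -/

variable {V : Type*} [DecidableEq V] (G : SimpleGraph V) [DecidableRel G.Adj]

/-- A word is extreme if it ends with a constant block preceded by a letter adjacent to it. -/
def ExtP {m : ℕ} (u : Fin (m+1) → V) : Prop :=
  ∃ i, i ≠ Fin.last m ∧ (∀ j, i < j → u j = u (Fin.last m)) ∧ G.Adj (u i) (u (Fin.last m))

instance {m : ℕ} (u : Fin (m+1) → V) : Decidable (ExtP G u) :=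
  inferInstanceAs (Decidable (∃ i, i ≠ Fin.last m ∧ (∀ j, i < j → u j = u (Fin.last m)) ∧
    G.Adj (u i) (u (Fin.last m))))

lemma extP_witness_unique {m : ℕ} {u : Fin (m+1) → V} {i₁ i₂ : Fin (m+1)}
    (h₁ : i₁ ≠ Fin.last m ∧ (∀ j, i₁ < j → u j = u (Fin.last m)) ∧ G.Adj (u i₁) (u (Fin.last m)))
    (h₂ : i₂ ≠ Fin.last m ∧ (∀ j, i₂ < j → u j = u (Fin.last m)) ∧ G.Adj (u i₂) (u (Fin.last m))) :
    i₁ = i₂ := by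
  rcases lt_trichotomy i₁ i₂ with h | h | h
  · exact absurd (h₁.2.1 i₂ h) (G.ne_of_adj h₂.2.2)
  · exact h
  · exact absurd (h₂.2.1 i₁ h) (G.ne_of_adj h₁.2.2)

lemma extP_one (u : Fin 1 → V) : ¬ ExtP G u := by
  rintro ⟨i, hi, -⟩
  exact hi (Fin.ext (by omega))

lemma extP_snoc {m : ℕ} (w : Fin (m+1) → V) (x : V) :
    ExtP G (Fin.snoc w x) ↔ G.Adj (w (Fin.last m)) x ∨ (x = w (Fin.last m) ∧ ExtP G w) := by
  have hlast : (Fin.snoc w x : Fin (m+2) → V) (Fin.last (m+1)) = x := Fin.snoc_last _ _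
  constructor
  · rintro ⟨i, hiL, hconst, hadj⟩
    obtain ⟨i', rfl⟩ := Fin.exists_castSucc_eq.2 hiL
    rw [Fin.snoc_castSucc, hlast] at hadj
    by_cases hi' : i' = Fin.last m
    · subst hi'; exact Or.inl hadj
    · right
      have hlt : i' < Fin.last m := lt_of_le_of_ne (Fin.le_last i') hi'
      have hx : w (Fin.last m) = x := by
        have h := hconst (Fin.castSucc (Fin.last m)) (Fin.castSucc_lt_castSucc_iff.2 hlt)
        rwa [Fin.snoc_castSucc, hlast] at h
      refine ⟨hx.symm, i', hi', ?_, ?_⟩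
      · intro j hj
        have h := hconst (Fin.castSucc j) (Fin.castSucc_lt_castSucc_iff.2 hj)
        rw [Fin.snoc_castSucc, hlast] at h
        rw [h, hx]
      · rwa [← hx] at hadj
  · rintro (hadj | ⟨hx, i', hi', hconst, hadj⟩)
    · refine ⟨Fin.castSucc (Fin.last m), (Fin.castSucc_lt_last _).ne, ?_, ?_⟩
      · intro j hj
        have hj' : j = Fin.last (m+1) := by
          by_contra hne
          obtain ⟨j', rfl⟩ := Fin.exists_castSucc_eq.2 hne
          exact absurd (Fin.castSucc_lt_castSucc_iff.1 hj) (not_lt.2 (Fin.le_last j'))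
        rw [hj']
      · rw [Fin.snoc_castSucc, hlast]; exact hadj
    · refine ⟨Fin.castSucc i', (Fin.castSucc_lt_last _).ne, ?_, ?_⟩
      · intro j hj
        rw [hlast]
        by_cases hne : j = Fin.last (m+1)
        · rw [hne, hlast]
        · obtain ⟨j', rfl⟩ := Fin.exists_castSucc_eq.2 hne
          rw [Fin.snoc_castSucc, hconst j' (Fin.castSucc_lt_castSucc_iff.1 hj), ← hx]
      · rw [Fin.snoc_castSucc, hlast, hx]; exact hadj

/-! #### Sums over words via `snoc` -/

lemma sum_snoc {M : Type*} [AddCommMonoid M] {m : ℕ} {W : Type*} [Fintype W]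
    (f : (Fin (m+1) → W) → M) :
    ∑ u, f u = ∑ w : Fin m → W, ∑ x : W, f (Fin.snoc w x) := by
  calc ∑ u, f u = ∑ p : (Fin m → W) × W, f (Fin.snoc p.1 p.2) :=
        (Fintype.sum_equiv
          (⟨fun p => Fin.snoc p.1 p.2, fun u => (Fin.init u, u (Fin.last m)),
            fun p => by simp, fun u => by simp⟩ : (Fin m → W) × W ≃ (Fin (m+1) → W))
          _ f (fun p => rfl)).symm
    _ = ∑ w : Fin m → W, ∑ x : W, f (Fin.snoc w x) :=
        Fintype.sum_prod_type' (fun w x => f (Fin.snoc w x))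


/-! #### Neighbors in the Sierpiński graph -/

section Sierp

variable {m : ℕ} [Fintype V]

/-- Adjacency in the Sierpiński graph, unfolded. -/
lemma sier_adj {t : ℕ} (u v : Fin t → V) :
    (sierpinskiGraph G t).Adj u v ↔ ∃ i : Fin t, (∀ j, j < i → u j = v j) ∧ u i ≠ v i ∧
      G.Adj (u i) (v i) ∧ ∀ j, i < j → u j = v i ∧ v j = u i := Iff.rfl

lemma lt_last_of_ne {j : Fin (m+2)} (h : j ≠ Fin.last (m+1)) : j < Fin.last (m+1) :=
  lt_of_le_of_ne (Fin.le_last j) h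

/-- A neighbor agreeing with `u` away from the last coordinate comes from a witness at the
last coordinate, hence is an update of the last letter. -/
lemma filter1_eq (u : Fin (m+2) → V) :
    ((sierpinskiGraph G (m+2)).neighborFinset u).filter
        (fun v => ∀ j, j ≠ Fin.last (m+1) → u j = v j)
      = (G.neighborFinset (u (Fin.last (m+1)))).image
          (fun x => Function.update u (Fin.last (m+1)) x) := by
  ext v
  simp only [Finset.mem_filter, SimpleGraph.mem_neighborFinset, Finset.mem_image]
  constructor
  · rintro ⟨⟨i, hpre, hne, hadj, hsuf⟩, hP⟩
    have hiL : i = Fin.last (m+1) := by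
      by_contra hiL
      exact hne (hP i hiL)
    subst hiL
    refine ⟨v (Fin.last (m+1)), hadj, ?_⟩
    funext j
    by_cases hj : j = Fin.last (m+1)
    · rw [hj, Function.update_self]
    · rw [Function.update_of_ne hj]
      exact hP j hj
  · rintro ⟨x, hadj, rfl⟩
    have hxne : u (Fin.last (m+1)) ≠ x := G.ne_of_adj hadj
    refine ⟨⟨Fin.last (m+1), ?_, ?_, ?_, ?_⟩, ?_⟩
    · intro j hj; rw [Function.update_of_ne hj.ne]
    · rw [Function.update_self]; exact hxne
    · rw [Function.update_self]; exact hadj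
    · intro j hj; exact absurd hj (not_lt.2 (Fin.le_last j))
    · intro j hj; rw [Function.update_of_ne hj]

/-- Structure of a neighbor that disagrees with `u` somewhere away from the last coordinate. -/
lemma filter2_mem {u v : Fin (m+2) → V}
    (hv : v ∈ ((sierpinskiGraph G (m+2)).neighborFinset u).filter
        (fun w => ¬ ∀ j, j ≠ Fin.last (m+1) → u j = w j)) :
    ∃ i, i ≠ Fin.last (m+1) ∧ (∀ j, j < i → u j = v j) ∧ v i = u (Fin.last (m+1)) ∧
      (∀ j, i < j → u j = u (Fin.last (m+1)) ∧ v j = u i) ∧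
      G.Adj (u i) (u (Fin.last (m+1))) := by
  rw [Finset.mem_filter, SimpleGraph.mem_neighborFinset] at hv
  obtain ⟨⟨i, hpre, hne, hadj, hsuf⟩, hP⟩ := hv
  have hiL : i ≠ Fin.last (m+1) := by
    rintro rfl
    exact hP fun j hj => hpre j (lt_last_of_ne hj)
  have hilt : i < Fin.last (m+1) := lt_last_of_ne hiL
  have hvi : v i = u (Fin.last (m+1)) := ((hsuf _ hilt).1).symm
  refine ⟨i, hiL, hpre, hvi, fun j hj => ?_, by rwa [hvi] at hadj⟩
  exact ⟨hvi ▸ (hsuf j hj).1, (hsuf j hj).2⟩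

lemma filter2_ext {u v : Fin (m+2) → V}
    (hv : v ∈ ((sierpinskiGraph G (m+2)).neighborFinset u).filter
        (fun w => ¬ ∀ j, j ≠ Fin.last (m+1) → u j = w j)) :
    ExtP G v := by
  obtain ⟨i, hiL, hpre, hvi, hsuf, hadj⟩ := filter2_mem G hv
  have hilt : i < Fin.last (m+1) := lt_last_of_ne hiL
  have hvL : v (Fin.last (m+1)) = u i := (hsuf _ hilt).2
  refine ⟨i, hiL, fun j hj => ?_, ?_⟩
  · rw [(hsuf j hj).2, hvL]
  · rw [hvi, hvL]; exact hadj.symm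

lemma filter2_extu {u v : Fin (m+2) → V}
    (hv : v ∈ ((sierpinskiGraph G (m+2)).neighborFinset u).filter
        (fun w => ¬ ∀ j, j ≠ Fin.last (m+1) → u j = w j)) :
    ExtP G u := by
  obtain ⟨i, hiL, hpre, hvi, hsuf, hadj⟩ := filter2_mem G hv
  exact ⟨i, hiL, fun j hj => (hsuf j hj).1, hadj⟩

lemma filter2_card (u : Fin (m+2) → V) :
    (((sierpinskiGraph G (m+2)).neighborFinset u).filter
        (fun w => ¬ ∀ j, j ≠ Fin.last (m+1) → u j = w j)).card
      = if ExtP G u then 1 else 0 := by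
  set F2 := ((sierpinskiGraph G (m+2)).neighborFinset u).filter
      (fun w => ¬ ∀ j, j ≠ Fin.last (m+1) → u j = w j) with hF2
  split_ifs with h
  · obtain ⟨i, hiL, hconst, hadj⟩ := h
    set v₀ : Fin (m+2) → V := fun j => if j < i then u j
      else if j = i then u (Fin.last (m+1)) else u i with hv₀
    have hv₀i : v₀ i = u (Fin.last (m+1)) := by simp [hv₀]
    have hv₀lt : ∀ j, j < i → v₀ j = u j := fun j hj => by simp [hv₀, hj]
    have hv₀gt : ∀ j, i < j → v₀ j = u i := fun j hj => by
      simp [hv₀, not_lt.2 hj.le, hj.ne']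
    have huine : u i ≠ u (Fin.last (m+1)) := G.ne_of_adj hadj
    have hmem : v₀ ∈ F2 := by
      rw [hF2, Finset.mem_filter, SimpleGraph.mem_neighborFinset]
      constructor
      · refine ⟨i, fun j hj => (hv₀lt j hj).symm, ?_, ?_, fun j hj => ?_⟩
        · rw [hv₀i]; exact huine
        · rw [hv₀i]; exact hadj
        · rw [hv₀i, hv₀gt j hj]; exact ⟨hconst j hj, rfl⟩
      · intro hP
        exact huine (hv₀i ▸ hP i hiL)
    rw [Finset.card_eq_one]
    refine ⟨v₀, Finset.eq_singleton_iff_unique_mem.2 ⟨hmem, fun v hv => ?_⟩⟩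
    obtain ⟨i', hiL', hpre', hvi', hsuf', hadj'⟩ := filter2_mem G hv
    have hii : i' = i := extP_witness_unique G
      ⟨hiL', fun j hj => (hsuf' j hj).1, hadj'⟩ ⟨hiL, hconst, hadj⟩
    subst hii
    funext j
    rcases lt_trichotomy j i' with hj | hj | hj
    · rw [← hpre' j hj, hv₀lt j hj]
    · subst hj; rw [hvi', hv₀i]
    · rw [(hsuf' j hj).2, hv₀gt j hj]
  · rw [Finset.card_eq_zero]
    by_contra hne
    obtain ⟨v, hv⟩ := Finset.nonempty_iff_ne_empty.2 hne
    exact h (filter2_extu G hv)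

lemma sier_degree (u : Fin (m+2) → V) :
    (sierpinskiGraph G (m+2)).degree u
      = G.degree (u (Fin.last (m+1))) + (if ExtP G u then 1 else 0) := by
  rw [SimpleGraph.degree, ← Finset.card_filter_add_card_filter_not
    (p := fun v => ∀ j, j ≠ Fin.last (m+1) → u j = v j), filter1_eq,
    Finset.card_image_of_injective _ (Function.update_injective u (Fin.last (m+1))),
    filter2_card]
  rfl

end Sierp

/-! #### Handshake-type lemma for the Randić index -/

lemma randic_eq {V : Type*} [Fintype V] [DecidableEq V] (G : SimpleGraph V)
    [DecidableRel G.Adj] (α : ℝ) :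
    randic G α = ∑ e ∈ G.edgeFinset,
      Sym2.lift ⟨fun u v => ((G.degree u : ℝ) * (G.degree v : ℝ)) ^ α,
        fun u v => by dsimp only; rw [mul_comm]⟩ e := by
  unfold randic
  congr! <;> exact Subsingleton.elim _ _

lemma two_mul_randic {V : Type*} [Fintype V] [DecidableEq V] (G : SimpleGraph V)
    [DecidableRel G.Adj] (α : ℝ) :
    2 * randic G α
      = ∑ u, ∑ v ∈ G.neighborFinset u, ((G.degree u : ℝ) * (G.degree v : ℝ)) ^ α := by
  rw [randic_eq]
  set F : Sym2 V → ℝ := Sym2.lift ⟨fun u v => ((G.degree u : ℝ) * (G.degree v : ℝ)) ^ α,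
      fun u v => by dsimp only; rw [mul_comm]⟩ with hF
  have key1 : ∑ d : G.Dart, F d.edge = 2 * ∑ e ∈ G.edgeFinset, F e := by
    rw [← Finset.sum_fiberwise_of_maps_to (g := fun d : G.Dart => d.edge) (t := G.edgeFinset)
      (fun d _ => by simp [SimpleGraph.Dart.edge_mem]) (fun d => F d.edge)]
    rw [Finset.mul_sum]
    refine Finset.sum_congr rfl fun e he => ?_
    have h1 : ∀ d ∈ Finset.univ.filter (fun d : G.Dart => d.edge = e), F d.edge = F e := by
      intro d hd; rw [(Finset.mem_filter.1 hd).2]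
    rw [Finset.sum_congr rfl h1, Finset.sum_const, G.dart_edge_fiber_card e
      (by rwa [← SimpleGraph.mem_edgeFinset]), nsmul_eq_mul]
    norm_num
  have key2 : ∑ d : G.Dart, F d.edge
      = ∑ u, ∑ v ∈ G.neighborFinset u, ((G.degree u : ℝ) * (G.degree v : ℝ)) ^ α := by
    rw [← Finset.sum_fiberwise_of_maps_to (g := fun d : G.Dart => d.fst) (t := Finset.univ)
      (fun d _ => Finset.mem_univ _) (fun d => F d.edge)]
    refine Finset.sum_congr rfl fun u _ => ?_
    rw [show (Finset.univ.filter (fun d : G.Dart => d.fst = u))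
        = ({d : G.Dart | d.fst = u} : Finset _) from rfl, G.dart_fst_fiber u,
      Finset.sum_image (fun a _ b _ h => G.dartOfNeighborSet_injective u h)]
    have h1 : ∀ x : G.neighborSet u, F (G.dartOfNeighborSet u x).edge
        = ((G.degree u : ℝ) * (G.degree (x : V) : ℝ)) ^ α := fun x => by
      simp [hF, SimpleGraph.dartOfNeighborSet, SimpleGraph.Dart.edge]
    rw [Finset.sum_congr rfl (fun x _ => h1 x)]
    exact (Finset.sum_subtype (G.neighborFinset u)
      (fun v => SimpleGraph.mem_neighborFinset G u v)
      (fun v => ((G.degree u : ℝ) * (G.degree v : ℝ)) ^ α)).symm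
  rw [← key1, key2]

/-! #### Counting extreme words over the cycle -/

lemma extC_snoc {N m : ℕ} (w : Fin (m+1) → Fin (N+4)) (x : Fin (N+4)) :
    ExtP (SimpleGraph.cycleGraph (N+4)) (Fin.snoc w x)
      ↔ (x = w (Fin.last m) + 1 ∨ x = w (Fin.last m) - 1
          ∨ (x = w (Fin.last m) ∧ ExtP (SimpleGraph.cycleGraph (N+4)) w)) := by
  rw [extP_snoc, cadj, or_assoc]

lemma card_extC {N : ℕ} (m : ℕ) :
    (Finset.univ.filter fun w : Fin (m+1) → Fin (N+4) =>
        ExtP (SimpleGraph.cycleGraph (N+4)) w).card = 2*(N+4)*psi (N+4) m := by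
  induction m with
  | zero =>
      rw [Finset.filter_false_of_mem (fun u _ => extP_one _ u)]
      simp [psi]
  | succ m ih =>
      rw [Finset.card_filter, sum_snoc (m := m+1)
        (f := fun u => if ExtP (SimpleGraph.cycleGraph (N+4)) u then 1 else 0)]
      have hx : ∀ w : Fin (m+1) → Fin (N+4),
          (∑ x : Fin (N+4), if ExtP (SimpleGraph.cycleGraph (N+4)) (Fin.snoc w x) then 1 else 0)
          = 2 + (if ExtP (SimpleGraph.cycleGraph (N+4)) w then 1 else 0) := by
        intro w
        set c := w (Fin.last m) with hc
        have hne1 : c + 1 ≠ c - 1 := fun h => fin2ne (by linear_combination h)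
        have hne2 : c + 1 ≠ c := fun h => fin1ne (by linear_combination h)
        have hne3 : c - 1 ≠ c := fun h => fin1ne (by linear_combination -h)
        rw [← Finset.card_filter]
        by_cases hq : ExtP (SimpleGraph.cycleGraph (N+4)) w
        · have : (Finset.univ.filter fun x : Fin (N+4) =>
              ExtP (SimpleGraph.cycleGraph (N+4)) (Fin.snoc w x))
              = ({c + 1, c - 1, c} : Finset (Fin (N+4))) := by
            ext x
            simp [extC_snoc, hq, ← hc]
          rw [this, if_pos hq]
          rw [Finset.card_insert_of_notMem (by simp [hne1, hne2]),
            Finset.card_insert_of_notMem (by simp [hne3]), Finset.card_singleton]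
        · have : (Finset.univ.filter fun x : Fin (N+4) =>
              ExtP (SimpleGraph.cycleGraph (N+4)) (Fin.snoc w x))
              = ({c + 1, c - 1} : Finset (Fin (N+4))) := by
            ext x
            simp [extC_snoc, hq, ← hc]
          rw [this, if_neg hq, Finset.card_insert_of_notMem (by simp [hne1]),
            Finset.card_singleton]
      rw [Finset.sum_congr rfl (fun w _ => hx w), Finset.sum_add_distrib,
        Finset.sum_const, ← Finset.card_filter, ih]
      simp only [Finset.card_univ, Fintype.card_fun, Fintype.card_fin, smul_eq_mul]
      have hpsi : psi (N+4) (m+1) = psi (N+4) m + (N+4)^m := Finset.sum_range_succ _ _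
      rw [hpsi]
      ring



/-! #### The inner sum over neighbors, for the cycle -/

/-- Real-valued degree weight. -/
noncomputable def dR {N m : ℕ} (v : Fin (m+1) → Fin (N+4)) : ℝ :=
  2 + (if ExtP (SimpleGraph.cycleGraph (N+4)) v then 1 else 0)

lemma deg_cast {N m : ℕ} (v : Fin (m+2) → Fin (N+4)) :
    (((sierpinskiGraph (SimpleGraph.cycleGraph (N+4)) (m+2)).degree v : ℕ) : ℝ) = dR v := by
  rw [sier_degree, cycle_degree, dR]
  push_cast
  split_ifs <;> norm_num

lemma update_eq_snoc {N m : ℕ} (w : Fin (m+1) → Fin (N+4)) (x y : Fin (N+4)) :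
    Function.update (Fin.snoc w x : Fin (m+2) → Fin (N+4)) (Fin.last (m+1)) y
      = Fin.snoc w y := by
  funext j
  by_cases hj : j = Fin.last (m+1)
  · rw [hj, Function.update_self, Fin.snoc_last]
  · obtain ⟨j', rfl⟩ := Fin.exists_castSucc_eq.2 hj
    rw [Function.update_of_ne (Fin.castSucc_lt_last _).ne, Fin.snoc_castSucc, Fin.snoc_castSucc]

lemma inner_sum {N m : ℕ} (α : ℝ) (u : Fin (m+2) → Fin (N+4)) :
    ∑ v ∈ (sierpinskiGraph (SimpleGraph.cycleGraph (N+4)) (m+2)).neighborFinset u,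
      (((sierpinskiGraph (SimpleGraph.cycleGraph (N+4)) (m+2)).degree u : ℝ)
        * ((sierpinskiGraph (SimpleGraph.cycleGraph (N+4)) (m+2)).degree v : ℝ)) ^ α
    = ((dR u * dR (Function.update u (Fin.last (m+1)) (u (Fin.last (m+1)) - 1))) ^ α
        + (dR u * dR (Function.update u (Fin.last (m+1)) (u (Fin.last (m+1)) + 1))) ^ α)
      + (if ExtP (SimpleGraph.cycleGraph (N+4)) u then (9:ℝ) ^ α else 0) := by
  have hnepair : u (Fin.last (m+1)) - 1 ≠ u (Fin.last (m+1)) + 1 :=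
    fun h => fin2ne (by linear_combination -h)
  have hsummand : ∀ v, (((sierpinskiGraph (SimpleGraph.cycleGraph (N+4)) (m+2)).degree u : ℝ)
      * ((sierpinskiGraph (SimpleGraph.cycleGraph (N+4)) (m+2)).degree v : ℝ)) ^ α
      = (dR u * dR v) ^ α := fun v => by rw [deg_cast, deg_cast]
  rw [Finset.sum_congr rfl (fun v _ => hsummand v)]
  rw [← Finset.sum_filter_add_sum_filter_not
    ((sierpinskiGraph (SimpleGraph.cycleGraph (N+4)) (m+2)).neighborFinset u)
    (fun v => ∀ j, j ≠ Fin.last (m+1) → u j = v j)]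
  congr 1
  · rw [filter1_eq, Finset.sum_image
      (fun a _ b _ h => Function.update_injective u (Fin.last (m+1)) h),
      SimpleGraph.cycleGraph_neighborFinset (n := N+2), Finset.sum_pair hnepair]
  · by_cases h : ExtP (SimpleGraph.cycleGraph (N+4)) u
    · have hcard := filter2_card (SimpleGraph.cycleGraph (N+4)) u
      rw [if_pos h] at hcard
      obtain ⟨v₀, hv₀⟩ := Finset.card_eq_one.1 hcard
      have hv₀mem : v₀ ∈ ((sierpinskiGraph (SimpleGraph.cycleGraph (N+4)) (m+2)).neighborFinset
          u).filter (fun w => ¬ ∀ j, j ≠ Fin.last (m+1) → u j = w j) := by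
        rw [hv₀]; exact Finset.mem_singleton_self v₀
      have hvext := filter2_ext (SimpleGraph.cycleGraph (N+4)) hv₀mem
      rw [hv₀, Finset.sum_singleton, if_pos h]
      rw [dR, dR, if_pos h, if_pos hvext]
      norm_num
    · have hcard := filter2_card (SimpleGraph.cycleGraph (N+4)) u
      rw [if_neg h] at hcard
      rw [Finset.card_eq_zero.1 hcard, Finset.sum_empty, if_neg h]

/-! #### The sum over the last letter, for a fixed prefix -/

lemma per_w {N k : ℕ} (α : ℝ) (w : Fin (k+1) → Fin (N+4)) :
    ∑ x : Fin (N+4),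
      (((dR (Fin.snoc w x) * dR (Fin.snoc w (x - 1))) ^ α
          + (dR (Fin.snoc w x) * dR (Fin.snoc w (x + 1))) ^ α)
        + (if ExtP (SimpleGraph.cycleGraph (N+4)) (Fin.snoc w x) then (9:ℝ) ^ α else 0))
    = (N:ℝ) * (2 * (4:ℝ) ^ α) + 4 * (6:ℝ) ^ α + 2 * (9:ℝ) ^ α
      + (if ExtP (SimpleGraph.cycleGraph (N+4)) w then 4 * (9:ℝ) ^ α + (9:ℝ) ^ α
          else 4 * (6:ℝ) ^ α) := by
  set c := w (Fin.last k) with hc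
  set q := ExtP (SimpleGraph.cycleGraph (N+4)) w with hq
  -- arithmetic facts
  -- arithmetic nonequalities around `c`
  have n1 : c + 1 ≠ c := fun h => fin1ne (by linear_combination h)
  have n2 : c - 1 ≠ c := fun h => fin1ne (by linear_combination -h)
  have n3 : c + 1 ≠ c - 1 := fun h => fin2ne (by linear_combination h)
  have n4 : c - 1 - 1 ≠ c - 1 := fun h => fin1ne (by linear_combination -h)
  have n5 : c - 1 - 1 ≠ c := fun h => fin2ne (by linear_combination -h)
  have n6 : c - 1 - 1 ≠ c + 1 := fun h => fin3ne (by linear_combination -h)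
  have n7 : c + 1 + 1 ≠ c + 1 := fun h => fin1ne (by linear_combination h)
  have n8 : c + 1 + 1 ≠ c := fun h => fin2ne (by linear_combination h)
  have n9 : c + 1 + 1 ≠ c - 1 := fun h => fin3ne (by linear_combination h)
  set E : Fin (N+4) → ℝ := fun y => if y = c + 1 ∨ y = c - 1 ∨ (y = c ∧ q) then 1 else 0
    with hE
  have hdR : ∀ y, dR (Fin.snoc w y) = 2 + E y := by
    intro y
    rw [dR, hE]
    congr 1
    exact if_congr (by rw [extC_snoc, ← hc, ← hq]) rfl rfl
  have hite : ∀ x : Fin (N+4), (if ExtP (SimpleGraph.cycleGraph (N+4)) (Fin.snoc w x)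
      then (9:ℝ)^α else 0) = (if x = c + 1 ∨ x = c - 1 ∨ (x = c ∧ q) then (9:ℝ)^α else 0) :=
    fun x => if_congr (by rw [extC_snoc, ← hc, ← hq]) rfl rfl
  have hsummand : ∀ x : Fin (N+4),
      ((dR (Fin.snoc w x) * dR (Fin.snoc w (x - 1))) ^ α
          + (dR (Fin.snoc w x) * dR (Fin.snoc w (x + 1))) ^ α)
        + (if ExtP (SimpleGraph.cycleGraph (N+4)) (Fin.snoc w x) then (9:ℝ) ^ α else 0)
      = (((2 + E x) * (2 + E (x - 1))) ^ α + ((2 + E x) * (2 + E (x + 1))) ^ α)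
        + (if x = c + 1 ∨ x = c - 1 ∨ (x = c ∧ q) then (9:ℝ)^α else 0) := by
    intro x
    rw [hdR, hdR, hdR, hite]
  rw [Finset.sum_congr rfl (fun x _ => hsummand x), Finset.sum_add_distrib,
    Finset.sum_add_distrib]
  -- the shifted sum equals the forward one
  have hrev : ∑ x : Fin (N+4), ((2 + E x) * (2 + E (x - 1))) ^ α
      = ∑ x : Fin (N+4), ((2 + E x) * (2 + E (x + 1))) ^ α := by
    refine Fintype.sum_equiv (Equiv.subRight (1 : Fin (N+4))) _ _ fun x => ?_
    simp only [Equiv.subRight_apply]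
    rw [sub_add_cancel, mul_comm]
  rw [hrev]
  -- the indicator sum
  have hC : ∑ x : Fin (N+4), (if x = c + 1 ∨ x = c - 1 ∨ (x = c ∧ q) then (9:ℝ)^α else 0)
      = (if q then 3 else 2) * (9:ℝ)^α := by
    rw [Finset.sum_ite, Finset.sum_const, Finset.sum_const_zero, add_zero]
    by_cases hq' : q
    · have hfil : (Finset.univ.filter fun x : Fin (N+4) =>
          x = c + 1 ∨ x = c - 1 ∨ (x = c ∧ q)) = ({c + 1, c - 1, c} : Finset (Fin (N+4))) := by
        ext x
        simp [hq']
      rw [hfil, if_pos hq', Finset.card_insert_of_notMem (by simp [n3, n1]),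
        Finset.card_insert_of_notMem (by simp [n2]), Finset.card_singleton]
      norm_num
    · have hfil : (Finset.univ.filter fun x : Fin (N+4) =>
          x = c + 1 ∨ x = c - 1 ∨ (x = c ∧ q)) = ({c + 1, c - 1} : Finset (Fin (N+4))) := by
        ext x
        simp [hq']
      rw [hfil, if_neg hq', Finset.card_insert_of_notMem (by simp [n3]),
        Finset.card_singleton]
      norm_num
  rw [hC]
  -- E-values
  have hE1 : E (c + 1) = 1 := by simp [hE]
  have hE2 : E (c - 1) = 1 := by simp [hE]
  have hE3 : E c = if q then 1 else 0 := by
    by_cases hq' : q <;> simp [hE, hq', Ne.symm n1, Ne.symm n2]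
  have hE4 : E (c - 1 - 1) = 0 := by simp [hE, n4, n5, n6]
  have hE5 : E (c + 1 + 1) = 0 := by simp [hE, n7, n8, n9]
  -- split the forward sum over the four special values
  have hT4 : ∑ x : Fin (N+4), ((2 + E x) * (2 + E (x + 1))) ^ α
      = (N:ℝ) * (4:ℝ)^α + (2 * (6:ℝ)^α + 2 * ((2 + (if q then (1:ℝ) else 0)) * 3) ^ α) := by
    set T4 : Finset (Fin (N+4)) := {c - 1 - 1, c - 1, c, c + 1} with hT4def
    rw [← Finset.sum_add_sum_compl T4]
    have hcardT4 : T4.card = 4 := by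
      rw [hT4def, Finset.card_insert_of_notMem (by simp [n4, n5, n6]),
        Finset.card_insert_of_notMem (by simp [n2, Ne.symm n3]),
        Finset.card_insert_of_notMem (by simp [Ne.symm n1]), Finset.card_singleton]
    have hcompl : ∀ x ∈ T4ᶜ, ((2 + E x) * (2 + E (x + 1))) ^ α = (4:ℝ)^α := by
      intro x hx
      rw [hT4def] at hx
      simp only [Finset.mem_compl, Finset.mem_insert, Finset.mem_singleton, not_or] at hx
      obtain ⟨hx1, hx2, hx3, hx4⟩ := hx
      have hPx : E x = 0 := by
        rw [hE]
        refine if_neg ?_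
        rintro (h | h | ⟨h, -⟩)
        · exact hx4 h
        · exact hx2 h
        · exact hx3 h
      have hPx1 : E (x + 1) = 0 := by
        rw [hE]
        refine if_neg ?_
        rintro (h | h | ⟨h, -⟩)
        · exact hx3 (by linear_combination h)
        · exact hx1 (by linear_combination h)
        · exact hx2 (by linear_combination h)
      rw [hPx, hPx1]
      norm_num
    have h1 : ∑ x ∈ T4ᶜ, ((2 + E x) * (2 + E (x + 1))) ^ α = (N:ℝ) * (4:ℝ)^α := by
      rw [Finset.sum_congr rfl hcompl, Finset.sum_const, Finset.card_compl, hcardT4,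
        Fintype.card_fin, show N + 4 - 4 = N by omega, nsmul_eq_mul]
    have h2 : ∑ x ∈ T4, ((2 + E x) * (2 + E (x + 1))) ^ α
        = 2 * (6:ℝ)^α + 2 * ((2 + (if q then (1:ℝ) else 0)) * 3) ^ α := by
      rw [hT4def, Finset.sum_insert (by simp [n4, n5, n6]),
        Finset.sum_insert (by simp [n2, Ne.symm n3]),
        Finset.sum_insert (by simp [Ne.symm n1]), Finset.sum_singleton]
      rw [show c - 1 - 1 + 1 = c - 1 from sub_add_cancel _ _,
        show c - 1 + 1 = c from sub_add_cancel _ _]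
      rw [hE1, hE2, hE3, hE4, hE5]
      rw [show ((2:ℝ)+0)*(2+1) = 6 by norm_num,
        show ((2:ℝ)+1)*(2+0) = 6 by norm_num,
        show ((2:ℝ)+1)*(2 + (if q then (1:ℝ) else 0)) = (2 + (if q then (1:ℝ) else 0))*3 by ring,
        show ((2:ℝ) + (if q then (1:ℝ) else 0))*(2+1) = (2 + (if q then (1:ℝ) else 0))*3 by ring]
      ring
    rw [h1, h2]
    ring
  rw [hT4]
  by_cases hq' : q
  · rw [if_pos hq', if_pos hq', if_pos hq']
    norm_num
    ring
  · rw [if_neg hq', if_neg hq', if_neg hq']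
    norm_num
    ring

end RSC

theorem randic_sierpinski_cycle {n t : ℕ} (hn : 4 ≤ n) (ht : 2 ≤ t) (α : ℝ) :
    randic (sierpinskiGraph (SimpleGraph.cycleGraph n) t) α =
      (4 : ℝ) ^ α * (n : ℝ) ^ (t - 1) * ((n : ℝ) - 4) +
        4 * (6 : ℝ) ^ α * ((n : ℝ) ^ (t - 1) - (n : ℝ) * (psi n (t - 2) : ℝ)) +
        (9 : ℝ) ^ α * (n : ℝ) * ((psi n (t - 1) : ℝ) + 4 * (psi n (t - 2) : ℝ)) := by
  obtain ⟨N, rfl⟩ : ∃ N, n = N + 4 := ⟨n - 4, by omega⟩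
  obtain ⟨k, rfl⟩ : ∃ k, t = k + 2 := ⟨t - 2, by omega⟩
  have key := RSC.two_mul_randic (sierpinskiGraph (SimpleGraph.cycleGraph (N+4)) (k+2)) α
  rw [Finset.sum_congr rfl (fun u _ => RSC.inner_sum (m := k) α u)] at key
  rw [RSC.sum_snoc (m := k+1)] at key
  have h2 : ∀ (w : Fin (k+1) → Fin (N+4)) (x : Fin (N+4)),
      (((RSC.dR (Fin.snoc w x) * RSC.dR (Function.update (Fin.snoc w x : Fin (k+2) → Fin (N+4))
            (Fin.last (k+1)) ((Fin.snoc w x : Fin (k+2) → Fin (N+4)) (Fin.last (k+1)) - 1))) ^ α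
          + (RSC.dR (Fin.snoc w x) * RSC.dR (Function.update (Fin.snoc w x : Fin (k+2) → Fin (N+4))
            (Fin.last (k+1)) ((Fin.snoc w x : Fin (k+2) → Fin (N+4)) (Fin.last (k+1)) + 1))) ^ α)
        + (if RSC.ExtP (SimpleGraph.cycleGraph (N+4)) (Fin.snoc w x) then (9:ℝ) ^ α else 0))
      = (((RSC.dR (Fin.snoc w x) * RSC.dR (Fin.snoc w (x - 1))) ^ α
          + (RSC.dR (Fin.snoc w x) * RSC.dR (Fin.snoc w (x + 1))) ^ α)
        + (if RSC.ExtP (SimpleGraph.cycleGraph (N+4)) (Fin.snoc w x) then (9:ℝ) ^ α else 0)) := by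
    intro w x
    rw [Fin.snoc_last, RSC.update_eq_snoc, RSC.update_eq_snoc]
  rw [Finset.sum_congr rfl (fun w _ => by
    rw [Finset.sum_congr rfl (fun x _ => h2 w x), RSC.per_w α w])] at key
  rw [Finset.sum_add_distrib, Finset.sum_const, Finset.sum_ite, Finset.sum_const,
    Finset.sum_const, Finset.filter_not, Finset.card_sdiff_of_subset (Finset.filter_subset _ _),
    RSC.card_extC k, Finset.card_univ, Fintype.card_fun, Fintype.card_fin] at key
  simp only [Fintype.card_fin] at key
  have hle : 2*(N+4)*psi (N+4) k ≤ (N+4)^(k+1) := by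
    calc 2*(N+4)*psi (N+4) k
        = (Finset.univ.filter fun w : Fin (k+1) → Fin (N+4) =>
            RSC.ExtP (SimpleGraph.cycleGraph (N+4)) w).card := (RSC.card_extC k).symm
      _ ≤ (Finset.univ : Finset (Fin (k+1) → Fin (N+4))).card := Finset.card_filter_le _ _
      _ = (N+4)^(k+1) := by simp [Finset.card_univ, Fintype.card_fun]
  simp only [nsmul_eq_mul] at key
  push_cast [hle] at key
  have hψ : (psi (N+4) (k+1) : ℝ) = (psi (N+4) k : ℝ) + ((N:ℝ)+4)^k := by
    have : psi (N+4) (k+1) = psi (N+4) k + (N+4)^k := by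
      rw [psi, psi, Finset.sum_range_succ]
    rw [this]
    push_cast
    ring
  rw [show k+2-1 = k+1 by omega, show k+2-2 = k by omega]
  push_cast
  linear_combination key/2 - (9:ℝ)^α * ((N:ℝ)+4) * hψ
end
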